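/- arXiv:1501.00924 — 10 statements merged into one kernel-verified Lean document; each statement's English description precedes it below -/
import Mathlib

section
/- Let β⁻ > 0, β⁺ > 0, 0 < h < 1, and d, e ∈ [0,1] with (d,e) ≠ (0,0). Then for every triple (c₁⁻, c₂⁻, c₃⁻) ∈ ℝ³ there exists a unique triple (c₁⁺, c₂⁺, c₃⁺) ∈ ℝ³ such that the jump conditions v⁻(D) = v⁺(D), v⁻(E) = v⁺(E), and β⁻(d c₂⁻ + e c₃⁻) = β⁺(d c₂⁺ + e c₃⁺) hold; that is, the piecewise linear function with these coefficients is a linear IFE function on K with interface parameters (d,e). -/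
/-- For the triangular interface element `K` with vertices `(0,0)`, `(h,0)`,
`(0,h)`, interface points `D = (0, d*h)`, `E = (e*h, 0)` with `(d,e) ≠ (0,0)`, every choice of
coefficients `(c₁⁻, c₂⁻, c₃⁻)` of the `-` piece extends uniquely to coefficients
`(c₁⁺, c₂⁺, c₃⁺)` of the `+` piece satisfying the jump conditions
`v⁻(D) = v⁺(D)`, `v⁻(E) = v⁺(E)`, `β⁻(d c₂⁻ + e c₃⁻) = β⁺(d c₂⁺ + e c₃⁺)`. -/
theorem stmt0 (βm βp h d e : ℝ) (hβm : 0 < βm) (hβp : 0 < βp)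
    (h0 : 0 < h) (h1 : h < 1)
    (hd : d ∈ Set.Icc (0:ℝ) 1) (he : e ∈ Set.Icc (0:ℝ) 1)
    (hde : (d, e) ≠ (0, 0))
    (c1m c2m c3m : ℝ) :
    ∃! c : ℝ × ℝ × ℝ,
      c1m + c3m * (d * h) = c.1 + c.2.2 * (d * h) ∧
      c1m + c2m * (e * h) = c.1 + c.2.1 * (e * h) ∧
      βm * (d * c2m + e * c3m) = βp * (d * c.2.1 + e * c.2.2) := by
  have hS : d ^ 2 + e ^ 2 ≠ 0 := by
    intro h'
    have hd0 : d = 0 := by nlinarith [sq_nonneg d, sq_nonneg e]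
    have he0 : e = 0 := by nlinarith [sq_nonneg d, sq_nonneg e]
    exact hde (by simp [hd0, he0])
  have hh : h ≠ 0 := ne_of_gt h0
  have hβp' : βp ≠ 0 := ne_of_gt hβp
  set A := c1m + c3m * (d * h) with hA
  set B := c1m + c2m * (e * h) with hB
  set F := βm * (d * c2m + e * c3m) / βp with hF
  refine ⟨((A * e ^ 2 + B * d ^ 2 - d * e * F * h) / (d ^ 2 + e ^ 2),
      (B * e - A * e + d * F * h) / ((d ^ 2 + e ^ 2) * h),
      (e * F * h - B * d + A * d) / ((d ^ 2 + e ^ 2) * h)), ⟨?_, ?_, ?_⟩, ?_⟩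
  · field_simp [hF]; ring
  · field_simp [hF]; ring
  · rw [hF]; field_simp; ring
  · rintro ⟨y1, y2, y3⟩ ⟨e1, e2, e3⟩
    simp only at e1 e2 e3 ⊢
    have hF' : F = d * y2 + e * y3 := by
      rw [hF, e3]; field_simp
    refine Prod.ext ?_ (Prod.ext ?_ ?_)
    · rw [eq_div_iff hS]
      linear_combination (-(e ^ 2)) * e1 + (-(d ^ 2)) * e2 + (d * e * h) * hF'
    · rw [eq_div_iff (mul_ne_zero hS hh)]
      linear_combination e * e1 + (-e) * e2 + (-(d * h)) * hF'
    · rw [eq_div_iff (mul_ne_zero hS hh)]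
      linear_combination (-d) * e1 + d * e2 + (-(e * h)) * hF'
end

section
/- There exists a constant C > 1 depending only on β⁻ and β⁺ (in particular independent of d, e and h) such that for all 0 < h < 1, all d, e ∈ [0,1] with (d,e) ≠ (0,0), and every linear IFE function v on K with interface parameters (d,e) and coefficients (c₁⁻, c₂⁻, c₃⁻) and (c₁⁺, c₂⁺, c₃⁺), one has (1/C)·∥(c₁⁺, c₂⁺, c₃⁺)∥ ≤ ∥(c₁⁻, c₂⁻, c₃⁻)∥ ≤ C·∥(c₁⁺, c₂⁺, c₃⁺)∥. -/
lemma ife_key (μ d e h c1m c2m c3m c1p c2p c3p : ℝ)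
    (hr : 0 < d^2 + e^2) (hd1 : d ≤ 1) (hd0 : 0 ≤ d) (hh0 : 0 < h) (hh1 : h < 1)
    (hs : d * c2m + e * c3m = μ * (d * c2p + e * c3p))
    (ht : d * c3m - e * c2m = d * c3p - e * c2p)
    (hc1 : c1m = c1p + (c3p - c3m) * (d * h)) :
    c1m^2 + c2m^2 + c3m^2 ≤ (9 + 5*μ^2) * (c1p^2 + c2p^2 + c3p^2) := by
  have hdh1 : d*h ≤ 1 := by nlinarith
  have hdh0 : 0 ≤ d*h := by positivity
  have hdh : (d*h)^2 ≤ 1 := by nlinarith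
  have h23 : c2m^2 + c3m^2 ≤ (μ^2 + 1) * (c2p^2 + c3p^2) := by
    have key : (d^2+e^2) * (c2m^2 + c3m^2) ≤ (d^2+e^2) * ((μ^2+1) * (c2p^2 + c3p^2)) := by
      have e1 : (d^2+e^2) * (c2m^2 + c3m^2)
          = (d*c2m + e*c3m)^2 + (d*c3m - e*c2m)^2 := by ring
      have e2 : (d^2+e^2) * (c2p^2 + c3p^2)
          = (d*c2p + e*c3p)^2 + (d*c3p - e*c2p)^2 := by ring
      rw [e1, hs, ht]
      nlinarith [sq_nonneg (d*c2p + e*c3p), sq_nonneg (d*c3p - e*c2p),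
        sq_nonneg (μ*(d*c3p - e*c2p))]
    exact le_of_mul_le_mul_left key hr
  have hc1sq : c1m^2 ≤ 2*c1p^2 + 4*c3p^2 + 4*c3m^2 := by
    subst hc1
    nlinarith [sq_nonneg (c1p - (c3p - c3m)*(d*h)), sq_nonneg (c3p + c3m),
      mul_le_mul_of_nonneg_left hdh (sq_nonneg (c3p - c3m))]
  nlinarith [sq_nonneg μ, sq_nonneg c2p, sq_nonneg c3p, sq_nonneg c1p]

/-- coefficient comparison for linear IFE functions on the triangle `K` with
vertices `(0,0)`, `(h,0)`, `(0,h)` and interface points `D = (0,d*h)`, `E = (e*h,0)`: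
there is a constant `C > 1` depending only on `β⁻, β⁺` such that
`(1/C)‖(c₁⁺,c₂⁺,c₃⁺)‖ ≤ ‖(c₁⁻,c₂⁻,c₃⁻)‖ ≤ C‖(c₁⁺,c₂⁺,c₃⁺)‖` for all coefficients
satisfying the jump conditions. -/
theorem stmt1 (βm βp : ℝ) (hβm : 0 < βm) (hβp : 0 < βp) :
    ∃ C : ℝ, 1 < C ∧
      ∀ h d e c1m c2m c3m c1p c2p c3p : ℝ,
        0 < h → h < 1 →
        d ∈ Set.Icc (0:ℝ) 1 → e ∈ Set.Icc (0:ℝ) 1 → (d, e) ≠ (0, 0) →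
        (c1m + c3m * (d * h) = c1p + c3p * (d * h)) →
        (c1m + c2m * (e * h) = c1p + c2p * (e * h)) →
        (βm * (d * c2m + e * c3m) = βp * (d * c2p + e * c3p)) →
        (1 / C) * Real.sqrt (c1p ^ 2 + c2p ^ 2 + c3p ^ 2)
            ≤ Real.sqrt (c1m ^ 2 + c2m ^ 2 + c3m ^ 2) ∧
        Real.sqrt (c1m ^ 2 + c2m ^ 2 + c3m ^ 2)
            ≤ C * Real.sqrt (c1p ^ 2 + c2p ^ 2 + c3p ^ 2) := by
  obtain ⟨μ, hμ0, hμdef⟩ : ∃ μ : ℝ, 0 < μ ∧ μ = βp / βm :=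
    ⟨_, div_pos hβp hβm, rfl⟩
  obtain ⟨ν, hν0, hνdef⟩ : ∃ ν : ℝ, 0 < ν ∧ ν = βm / βp :=
    ⟨_, div_pos hβm hβp, rfl⟩
  obtain ⟨C, hCdef⟩ : ∃ C : ℝ, C = 10 + 5*μ^2 + 5*ν^2 := ⟨_, rfl⟩
  have hC1 : (1:ℝ) < C := by rw [hCdef]; nlinarith [sq_nonneg μ, sq_nonneg ν]
  refine ⟨C, hC1, ?_⟩
  have hC0 : (0:ℝ) < C := by linarith
  intro h d e c1m c2m c3m c1p c2p c3p hh0 hh1 hd he hde h1 h2 h3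
  obtain ⟨hd0, hd1⟩ := hd
  obtain ⟨he0, he1⟩ := he
  have hr : 0 < d^2 + e^2 := by
    rcases eq_or_ne d 0 with rfl | hdne
    · have : e ≠ 0 := by
        intro h'; exact hde (by simp [h'])
      positivity
    · positivity
  -- common relations
  have ht : d * c3m - e * c2m = d * c3p - e * c2p := by
    have hne : h ≠ 0 := ne_of_gt hh0
    have : h * (d * c3m - e * c2m) = h * (d * c3p - e * c2p) := by ring_nf; nlinarith [h1, h2]
    exact mul_left_cancel₀ hne this
  have hsm : d * c2m + e * c3m = μ * (d * c2p + e * c3p) := by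
    rw [hμdef]
    field_simp
    linarith [h3]
  have hsp : d * c2p + e * c3p = ν * (d * c2m + e * c3m) := by
    rw [hνdef]
    field_simp
    linarith [h3]
  have hc1m : c1m = c1p + (c3p - c3m) * (d * h) := by linarith [h1]
  have hc1p : c1p = c1m + (c3m - c3p) * (d * h) := by linarith [h1]
  have bm := ife_key μ d e h c1m c2m c3m c1p c2p c3p hr hd1 hd0 hh0 hh1 hsm ht hc1m
  have bp := ife_key ν d e h c1p c2p c3p c1m c2m c3m hr hd1 hd0 hh0 hh1 hsp
    (by linarith [ht]) hc1p
  have hSm : (0:ℝ) ≤ c1m^2 + c2m^2 + c3m^2 := by positivity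
  have hSp : (0:ℝ) ≤ c1p^2 + c2p^2 + c3p^2 := by positivity
  have hCsq : C ≤ C^2 := by nlinarith
  have hC2m : c1m^2 + c2m^2 + c3m^2 ≤ C^2 * (c1p^2 + c2p^2 + c3p^2) := by
    have hmu1 : (9 + 5*μ^2) ≤ C := by rw [hCdef]; linarith [sq_nonneg ν]
    have hmu : (9 + 5*μ^2) ≤ C^2 := le_trans hmu1 hCsq
    calc c1m^2 + c2m^2 + c3m^2 ≤ (9 + 5*μ^2) * (c1p^2 + c2p^2 + c3p^2) := bm
      _ ≤ C^2 * (c1p^2 + c2p^2 + c3p^2) := mul_le_mul_of_nonneg_right hmu hSp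
  have hC2p : c1p^2 + c2p^2 + c3p^2 ≤ C^2 * (c1m^2 + c2m^2 + c3m^2) := by
    have hnu1 : (9 + 5*ν^2) ≤ C := by rw [hCdef]; linarith [sq_nonneg μ]
    have hnu : (9 + 5*ν^2) ≤ C^2 := le_trans hnu1 hCsq
    calc c1p^2 + c2p^2 + c3p^2 ≤ (9 + 5*ν^2) * (c1m^2 + c2m^2 + c3m^2) := bp
      _ ≤ C^2 * (c1m^2 + c2m^2 + c3m^2) := mul_le_mul_of_nonneg_right hnu hSm
  have sqrtC2 : ∀ x : ℝ, Real.sqrt (C^2 * x) = C * Real.sqrt x := by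
    intro x
    rw [Real.sqrt_mul (by positivity), Real.sqrt_sq hC0.le]
  constructor
  · rw [div_mul_eq_mul_div, one_mul, div_le_iff₀ hC0]
    calc Real.sqrt (c1p ^ 2 + c2p ^ 2 + c3p ^ 2)
        ≤ Real.sqrt (C^2 * (c1m^2 + c2m^2 + c3m^2)) := Real.sqrt_le_sqrt hC2p
      _ = C * Real.sqrt (c1m^2 + c2m^2 + c3m^2) := sqrtC2 _
      _ = Real.sqrt (c1m^2 + c2m^2 + c3m^2) * C := mul_comm _ _
  · calc Real.sqrt (c1m ^ 2 + c2m ^ 2 + c3m ^ 2)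
        ≤ Real.sqrt (C^2 * (c1p^2 + c2p^2 + c3p^2)) := Real.sqrt_le_sqrt hC2m
      _ = C * Real.sqrt (c1p^2 + c2p^2 + c3p^2) := sqrtC2 _
end

section
/- There exists a constant C > 1 depending only on β⁻ and β⁺ (in particular independent of d, e and h) such that for all 0 < h < 1, all d, e ∈ [0,1] with (d,e) ≠ (0,0), and every linear IFE function v on K with interface parameters (d,e), one has (1/C)·∥(c₂⁺, c₃⁺)∥ ≤ ∥(c₂⁻, c₃⁻)∥ ≤ C·∥(c₂⁺, c₃⁺)∥. Moreover, the gradient coefficients (c₂⁺, c₃⁺) are determined by (c₂⁻, c₃⁻) alone: if two linear IFE functions with the same interface parameters have the same (c₂⁻, c₃⁻) but possibly different c₁⁻, then they have the same (c₂⁺, c₃⁺). -/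
private lemma sq_ineq (βm βp C d e am bm ap bp : ℝ) (hβm : 0 < βm) (hβp : 0 < βp)
    (hC : βp ≤ C * βm) (hC1 : 1 ≤ C)
    (hr : 0 < d ^ 2 + e ^ 2)
    (hT : e * am - d * bm = e * ap - d * bp)
    (hN : βm * (d * am + e * bm) = βp * (d * ap + e * bp)) :
    am ^ 2 + bm ^ 2 ≤ C ^ 2 * (ap ^ 2 + bp ^ 2) := by
  have key : (d ^ 2 + e ^ 2) * (am ^ 2 + bm ^ 2) ≤
      (d ^ 2 + e ^ 2) * (C ^ 2 * (ap ^ 2 + bp ^ 2)) := by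
    have id1 : (d ^ 2 + e ^ 2) * (am ^ 2 + bm ^ 2)
        = (e * ap - d * bp) ^ 2 + (d * am + e * bm) ^ 2 := by
      rw [← hT]; ring
    have id2 : (d ^ 2 + e ^ 2) * (ap ^ 2 + bp ^ 2)
        = (e * ap - d * bp) ^ 2 + (d * ap + e * bp) ^ 2 := by ring
    have hNm2 : (d * am + e * bm) ^ 2 * βm ^ 2 = (d * ap + e * bp) ^ 2 * βp ^ 2 := by
      linear_combination (βm * (d * am + e * bm) + βp * (d * ap + e * bp)) * hN
    have hβ2 : βp ^ 2 ≤ C ^ 2 * βm ^ 2 := by nlinarith [hβp, hβm, hC]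
    have hβ2' : (d * ap + e * bp) ^ 2 * βp ^ 2
        ≤ (d * ap + e * bp) ^ 2 * (C ^ 2 * βm ^ 2) :=
      mul_le_mul_of_nonneg_left hβ2 (sq_nonneg _)
    have h1 : (d * am + e * bm) ^ 2 ≤ C ^ 2 * (d * ap + e * bp) ^ 2 := by
      nlinarith [hNm2, hβ2', mul_pos hβm hβm]
    have hC2 : (1:ℝ) ≤ C ^ 2 := by nlinarith
    have h2 : (e * ap - d * bp) ^ 2 ≤ C ^ 2 * (e * ap - d * bp) ^ 2 := by
      nlinarith [sq_nonneg (e * ap - d * bp), hC2]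
    have id3 : (d ^ 2 + e ^ 2) * (C ^ 2 * (ap ^ 2 + bp ^ 2))
        = C ^ 2 * (e * ap - d * bp) ^ 2 + C ^ 2 * (d * ap + e * bp) ^ 2 := by
      linear_combination C ^ 2 * id2
    rw [id1, id3]
    linarith [h1, h2]
  exact le_of_mul_le_mul_left key hr

private lemma sqrt_ineq (C a b : ℝ) (hC : 0 < C) (hab : a ≤ C ^ 2 * b) :
    Real.sqrt a ≤ C * Real.sqrt b := by
  calc Real.sqrt a ≤ Real.sqrt (C ^ 2 * b) := Real.sqrt_le_sqrt hab
    _ = C * Real.sqrt b := by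
        rw [Real.sqrt_mul (sq_nonneg C), Real.sqrt_sq hC.le]

private lemma pos_sum_sq (d e : ℝ) (hde : (d, e) ≠ (0, 0)) : 0 < d ^ 2 + e ^ 2 := by
  have hdor : d ≠ 0 ∨ e ≠ 0 := by
    by_contra hc
    push_neg at hc
    exact hde (by simp [hc.1, hc.2])
  rcases hdor with hd0 | he0
  · have h2 : 0 < d ^ 2 := (sq_nonneg d).lt_of_ne (Ne.symm (pow_ne_zero 2 hd0))
    nlinarith [sq_nonneg e]
  · have h2 : 0 < e ^ 2 := (sq_nonneg e).lt_of_ne (Ne.symm (pow_ne_zero 2 he0))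
    nlinarith [sq_nonneg d]

/-- gradient-coefficient comparison for linear IFE functions on the triangle `K`
with vertices `(0,0)`, `(h,0)`, `(0,h)` and interface points `D = (0,d*h)`, `E = (e*h,0)`:
there is `C > 1` depending only on `β⁻, β⁺` with
`(1/C)‖(c₂⁺,c₃⁺)‖ ≤ ‖(c₂⁻,c₃⁻)‖ ≤ C‖(c₂⁺,c₃⁺)‖`; moreover `(c₂⁺,c₃⁺)` is determined by
`(c₂⁻,c₃⁻)` alone (independently of `c₁⁻`). -/
theorem stmt2 (βm βp : ℝ) (hβm : 0 < βm) (hβp : 0 < βp) :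
    ∃ C : ℝ, 1 < C ∧
      (∀ h d e c1m c2m c3m c1p c2p c3p : ℝ,
        0 < h → h < 1 →
        d ∈ Set.Icc (0:ℝ) 1 → e ∈ Set.Icc (0:ℝ) 1 → (d, e) ≠ (0, 0) →
        (c1m + c3m * (d * h) = c1p + c3p * (d * h)) →
        (c1m + c2m * (e * h) = c1p + c2p * (e * h)) →
        (βm * (d * c2m + e * c3m) = βp * (d * c2p + e * c3p)) →
        (1 / C) * Real.sqrt (c2p ^ 2 + c3p ^ 2) ≤ Real.sqrt (c2m ^ 2 + c3m ^ 2) ∧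
        Real.sqrt (c2m ^ 2 + c3m ^ 2) ≤ C * Real.sqrt (c2p ^ 2 + c3p ^ 2)) ∧
      (∀ h d e c2m c3m c1m c1p c2p c3p c1m' c1p' c2p' c3p' : ℝ,
        0 < h → h < 1 →
        d ∈ Set.Icc (0:ℝ) 1 → e ∈ Set.Icc (0:ℝ) 1 → (d, e) ≠ (0, 0) →
        (c1m + c3m * (d * h) = c1p + c3p * (d * h)) →
        (c1m + c2m * (e * h) = c1p + c2p * (e * h)) →
        (βm * (d * c2m + e * c3m) = βp * (d * c2p + e * c3p)) →
        (c1m' + c3m * (d * h) = c1p' + c3p' * (d * h)) →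
        (c1m' + c2m * (e * h) = c1p' + c2p' * (e * h)) →
        (βm * (d * c2m + e * c3m) = βp * (d * c2p' + e * c3p')) →
        c2p = c2p' ∧ c3p = c3p') := by
  have h1' : 0 < βm / βp := div_pos hβm hβp
  have h2' : 0 < βp / βm := div_pos hβp hβm
  have hcancel1 : (βp / βm) * βm = βp := div_mul_cancel₀ βp (ne_of_gt hβm)
  have hcancel2 : (βm / βp) * βp = βm := div_mul_cancel₀ βm (ne_of_gt hβp)
  refine ⟨1 + βm / βp + βp / βm, by linarith, ?_, ?_⟩
  · intro h d e c1m c2m c3m c1p c2p c3p hh hh1 hd he hde h1 h2 h3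
    have hC1 : (1:ℝ) ≤ 1 + βm / βp + βp / βm := by linarith
    have hC0 : (0:ℝ) < 1 + βm / βp + βp / βm := by linarith
    have hCa : βp ≤ (1 + βm / βp + βp / βm) * βm := by
      nlinarith [mul_pos h1' hβm]
    have hCb : βm ≤ (1 + βm / βp + βp / βm) * βp := by
      nlinarith [mul_pos h2' hβp]
    have hr := pos_sum_sq d e hde
    have hTh : (e * c2m - d * c3m) * h = (e * c2p - d * c3p) * h := by
      linear_combination h2 - h1
    have hT : e * c2m - d * c3m = e * c2p - d * c3p :=
      mul_right_cancel₀ (ne_of_gt hh) hTh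
    have hMain := sq_ineq βm βp _ d e c2m c3m c2p c3p hβm hβp hCa hC1 hr hT h3
    have hMain' := sq_ineq βp βm _ d e c2p c3p c2m c3m hβp hβm hCb hC1 hr hT.symm h3.symm
    constructor
    · have h' := sqrt_ineq _ _ _ hC0 hMain'
      rw [div_mul_eq_mul_div, div_le_iff₀ hC0]
      nlinarith [h']
    · exact sqrt_ineq _ _ _ hC0 hMain
  · intro h d e c2m c3m c1m c1p c2p c3p c1m' c1p' c2p' c3p'
      hh hh1 hd he hde h1 h2 h3 h1' h2' h3'
    have hr := pos_sum_sq d e hde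
    have hT1 : (e * c2m - d * c3m) * h = (e * c2p - d * c3p) * h := by
      linear_combination h2 - h1
    have hT2 : (e * c2m - d * c3m) * h = (e * c2p' - d * c3p') * h := by
      linear_combination h2' - h1'
    have hT : (e * c2p - d * c3p) = (e * c2p' - d * c3p') :=
      mul_right_cancel₀ (ne_of_gt hh) (hT1.symm.trans hT2)
    have hN : d * c2p + e * c3p = d * c2p' + e * c3p' :=
      mul_left_cancel₀ (ne_of_gt hβp) (h3.symm.trans h3')
    constructor
    · have key : (d ^ 2 + e ^ 2) * c2p = (d ^ 2 + e ^ 2) * c2p' := by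
        linear_combination d * hN + e * hT
      exact mul_left_cancel₀ (ne_of_gt hr) key
    · have key : (d ^ 2 + e ^ 2) * c3p = (d ^ 2 + e ^ 2) * c3p' := by
        linear_combination e * hN - d * hT
      exact mul_left_cancel₀ (ne_of_gt hr) key
end

section
/- There exists a constant C depending only on β⁻ and β⁺ (independent of d, e and h) such that for all 0 < h < 1, all d, e ∈ [0,1] with (d,e) ≠ (0,0), every linear IFE function v on K with interface parameters (d,e), every edge B of K, and each p ∈ {x, y}: ∥β v_p∥_{L²(B)} ≤ C h^{1/2} |K|^{-1/2} ∥√β ∇v∥_{L²(K)}. -/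
open MeasureTheory

/-- The closed triangle `K` with vertices `(0,0)`, `(h,0)`, `(0,h)`. -/
def triK (h : ℝ) : Set (ℝ × ℝ) := {X | 0 ≤ X.1 ∧ 0 ≤ X.2 ∧ X.1 + X.2 ≤ h}

/-- The subelement `K⁻ = {(x,y) ∈ K : d x + e y ≤ d e h}`. -/
def triKm (h d e : ℝ) : Set (ℝ × ℝ) := {X ∈ triK h | d * X.1 + e * X.2 ≤ d * e * h}

/-- The subelement `K⁺ = {(x,y) ∈ K : d x + e y ≥ d e h}`. -/
def triKp (h d e : ℝ) : Set (ℝ × ℝ) := {X ∈ triK h | d * e * h ≤ d * X.1 + e * X.2}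

/-- `∥√β ∇v∥²_{L²(K)} = β⁻∫_{K⁻}|∇v⁻|² + β⁺∫_{K⁺}|∇v⁺|²` for the piecewise linear
function with gradients `(c₂⁻,c₃⁻)` on `K⁻` and `(c₂⁺,c₃⁺)` on `K⁺`. -/
noncomputable def energySqLin (βm βp h d e c2m c3m c2p c3p : ℝ) : ℝ :=
  βm * (∫ _X in triKm h d e, (c2m ^ 2 + c3m ^ 2)) +
    βp * (∫ _X in triKp h d e, (c2p ^ 2 + c3p ^ 2))

/-- `∥β v_p∥²_{L²(B)} = ∫_{B∩K⁻}(β⁻ ∂ₚv⁻)² ds + ∫_{B∩K⁺}(β⁺ ∂ₚv⁺)² ds`, where the segment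
`B` from `P` to `Q` is parametrized by `t ↦ P + t(Q-P)`, `t ∈ [0,1]`, and `ds` is the
arclength measure (`amv`, `apv` are the two constant values of `∂ₚ v`). -/
noncomputable def edgeSqLin (βm βp h d e amv apv : ℝ) (P Q : ℝ × ℝ) : ℝ :=
  Real.sqrt ((Q.1 - P.1) ^ 2 + (Q.2 - P.2) ^ 2) *
    ((∫ _t in {t : ℝ | t ∈ Set.Icc (0:ℝ) 1 ∧ P + t • (Q - P) ∈ triKm h d e}, (βm * amv) ^ 2) +
     (∫ _t in {t : ℝ | t ∈ Set.Icc (0:ℝ) 1 ∧ P + t • (Q - P) ∈ triKp h d e}, (βp * apv) ^ 2))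

lemma triK_sub_Icc (h : ℝ) : triK h ⊆ Set.Icc ((0:ℝ),(0:ℝ)) (h,h) := by
  rintro ⟨x,y⟩ ⟨hx,hy,hxy⟩
  exact ⟨⟨hx,hy⟩, ⟨by linarith, by linarith⟩⟩

lemma vol_Icc_prod (a b : ℝ) (ha : 0 ≤ a) (hb : 0 ≤ b) :
    volume (Set.Icc ((0:ℝ),(0:ℝ)) (a,b)) = ENNReal.ofReal (a*b) := by
  rw [Set.Icc_prod_eq, MeasureTheory.Measure.volume_eq_prod, MeasureTheory.Measure.prod_prod]
  simp [Real.volume_Icc, ← ENNReal.ofReal_mul ha]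

lemma vol_triK_lb (h : ℝ) (hh : 0 < h) : ENNReal.ofReal (h^2/4) ≤ volume (triK h) := by
  have hsub : Set.Icc ((0:ℝ),(0:ℝ)) (h/2, h/2) ⊆ triK h := by
    rintro ⟨x,y⟩ ⟨⟨hx,hy⟩, ⟨hx1,hy1⟩⟩
    exact ⟨hx, hy, by simp at hx1 hy1 ⊢; linarith⟩
  calc ENNReal.ofReal (h^2/4) = volume (Set.Icc ((0:ℝ),(0:ℝ)) (h/2, h/2)) := by
        rw [vol_Icc_prod _ _ (by linarith) (by linarith)]; ring_nf
    _ ≤ volume (triK h) := measure_mono hsub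

lemma vol_sub_lt_top {h : ℝ} {s : Set (ℝ×ℝ)} (hs : s ⊆ triK h) : volume s < ⊤ :=
  lt_of_le_of_lt (measure_mono (hs.trans (triK_sub_Icc h))) isCompact_Icc.measure_lt_top

lemma vol_split (h d e : ℝ) (hh : 0 < h) :
    h^2/4 ≤ (volume (triKm h d e)).toReal + (volume (triKp h d e)).toReal := by
  have hcov : triK h ⊆ triKm h d e ∪ triKp h d e := fun X hX => by
    rcases le_total (d*X.1+e*X.2) (d*e*h) with h'|h'
    · exact Or.inl ⟨hX, h'⟩
    · exact Or.inr ⟨hX, h'⟩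
  have h1 : ENNReal.ofReal (h^2/4) ≤ volume (triKm h d e) + volume (triKp h d e) :=
    (vol_triK_lb h hh).trans ((measure_mono hcov).trans (measure_union_le _ _))
  have fm : volume (triKm h d e) ≠ ⊤ := (vol_sub_lt_top (fun X hX => hX.1)).ne
  have fp : volume (triKp h d e) ≠ ⊤ := (vol_sub_lt_top (fun X hX => hX.1)).ne
  have h2 := ENNReal.toReal_mono (ENNReal.add_ne_top.2 ⟨fm, fp⟩) h1
  rwa [ENNReal.toReal_add fm fp, ENNReal.toReal_ofReal (by positivity)] at h2

lemma vol_seg_le_one (s : Set ℝ) (hs : s ⊆ Set.Icc (0:ℝ) 1) : (volume s).toReal ≤ 1 := by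
  have h1 : volume s ≤ volume (Set.Icc (0:ℝ) 1) := measure_mono hs
  have h2 : volume (Set.Icc (0:ℝ) 1) = 1 := by rw [Real.volume_Icc]; norm_num
  have := ENNReal.toReal_mono (by rw [h2]; exact ENNReal.one_ne_top) h1
  rwa [h2, ENNReal.toReal_one] at this

noncomputable def myC (βm βp : ℝ) : ℝ :=
  Real.sqrt (4 * (max βm βp)^2 * ((min βm βp)^2 + (max βm βp)^2) / (min βm βp)^3)

lemma aux_final (βm βp h E Edge gm gp : ℝ) (hβm : 0 < βm) (hβp : 0 < βp)
    (hh : 0 < h) (hE : 0 ≤ E) (hEdge0 : 0 ≤ Edge)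
    (hEdge : Edge ≤ 2*h*(max βm βp)^2*(gm+gp))
    (hEnergy : (min βm βp)^3 * h^2 * (gm+gp) ≤ 4 * (E * ((min βm βp)^2 + (max βm βp)^2))) :
    Real.sqrt Edge ≤ myC βm βp * Real.sqrt h * (Real.sqrt (h^2/2))⁻¹ * Real.sqrt E := by
  set Mx := max βm βp with hMxd
  set Mn := min βm βp with hMnd
  have hMn : 0 < Mn := lt_min hβm hβp
  have hMx : 0 < Mx := lt_of_lt_of_le hβm (le_max_left _ _)
  set C := myC βm βp with hCd
  have hC2 : C^2 = 4 * Mx^2 * (Mn^2 + Mx^2) / Mn^3 := by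
    rw [hCd, myC, Real.sq_sqrt (by positivity)]
  have hC2' : C^2 * Mn^3 = 4 * Mx^2 * (Mn^2 + Mx^2) := by
    rw [hC2]; field_simp
  set R := C * Real.sqrt h * (Real.sqrt (h^2/2))⁻¹ * Real.sqrt E with hRd
  have hC0 : 0 < C := by rw [hCd, myC]; exact Real.sqrt_pos.2 (by positivity)
  have hR0 : 0 ≤ R :=
    mul_nonneg (mul_nonneg (mul_nonneg hC0.le (Real.sqrt_nonneg _))
      (inv_nonneg.2 (Real.sqrt_nonneg _))) (Real.sqrt_nonneg _)
  have hR2 : R^2 = 2 * C^2 * E / h := by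
    have h1 : Real.sqrt h ^ 2 = h := Real.sq_sqrt hh.le
    have h2 : Real.sqrt (h^2/2) ^ 2 = h^2/2 := Real.sq_sqrt (by positivity)
    have h3 : Real.sqrt E ^ 2 = E := Real.sq_sqrt hE
    have : R^2 = C^2 * (Real.sqrt h ^2) * ((Real.sqrt (h^2/2))^2)⁻¹ * (Real.sqrt E ^2) := by
      rw [hRd]; ring
    rw [this, h1, h2, h3]
    field_simp
  have key : Edge ≤ R^2 := by
    rw [hR2]
    rw [le_div_iff₀ hh]
    have s1 : Edge * (h * Mn^3) ≤ 2*h*Mx^2*(gm+gp) * (h*Mn^3) :=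
      mul_le_mul_of_nonneg_right hEdge (by positivity)
    have s2 : 2*h*Mx^2*(gm+gp)*(h*Mn^3) = 2*Mx^2*(Mn^3 * h^2 * (gm+gp)) := by ring
    have s3 : 2*Mx^2*(Mn^3 * h^2 * (gm+gp)) ≤ 2*Mx^2*(4 * (E * (Mn^2 + Mx^2))) :=
      mul_le_mul_of_nonneg_left hEnergy (by positivity)
    have s4 : Edge * (h*Mn^3) ≤ 2 * C^2 * E * Mn^3 := by
      calc Edge * (h*Mn^3) ≤ 2*Mx^2*(4 * (E * (Mn^2 + Mx^2))) := by linarith [s1, s2.le, s3]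
        _ = 2 * (4 * Mx^2 * (Mn^2 + Mx^2)) * E := by ring
        _ = 2 * C^2 * E * Mn^3 := by rw [← hC2']; ring
    have hMn3 : 0 < Mn^3 := by positivity
    nlinarith [s4]
  calc Real.sqrt Edge ≤ Real.sqrt (R^2) := Real.sqrt_le_sqrt key
    _ = R := Real.sqrt_sq hR0


lemma sq_prod_le (b M a g : ℝ) (hb : b^2 ≤ M^2) (ha : a^2 ≤ g) : (b*a)^2 ≤ M^2*g :=
  calc (b*a)^2 = b^2*a^2 := by ring
    _ ≤ M^2*a^2 := mul_le_mul_of_nonneg_right hb (sq_nonneg a)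
    _ ≤ M^2*g := mul_le_mul_of_nonneg_left ha (sq_nonneg M)

lemma alg_edge (Mx βm βp L sm sp am ap gm gp h : ℝ) (hL0 : 0 ≤ L) (hL : L ≤ 2*h)
    (hh : 0 ≤ h) (hsm0 : 0 ≤ sm) (hsm1 : sm ≤ 1) (hsp0 : 0 ≤ sp) (hsp1 : sp ≤ 1)
    (hiA : (βm*am)^2 ≤ Mx^2*gm) (hiB : (βp*ap)^2 ≤ Mx^2*gp) :
    L*(sm*(βm*am)^2+sp*(βp*ap)^2) ≤ 2*h*Mx^2*(gm+gp) := by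
  have a1 : sm*(βm*am)^2 ≤ (βm*am)^2 := mul_le_of_le_one_left (sq_nonneg _) hsm1
  have a2 : sp*(βp*ap)^2 ≤ (βp*ap)^2 := mul_le_of_le_one_left (sq_nonneg _) hsp1
  have i0 : 0 ≤ sm*(βm*am)^2+sp*(βp*ap)^2 :=
    add_nonneg (mul_nonneg hsm0 (sq_nonneg _)) (mul_nonneg hsp0 (sq_nonneg _))
  calc L*(sm*(βm*am)^2+sp*(βp*ap)^2) ≤ (2*h)*(Mx^2*gm+Mx^2*gp) :=
        mul_le_mul hL (by linarith) i0 (by linarith)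
    _ = 2*h*Mx^2*(gm+gp) := by ring

lemma alg_energy (Mn Mx Vm Vp gm gp h E : ℝ) (hMn : 0 < Mn)
    (hVm0 : 0 ≤ Vm) (hVp0 : 0 ≤ Vp) (hgm : 0 ≤ gm) (hgp : 0 ≤ gp)
    (hVs : h^2/4 ≤ Vm+Vp) (hc1 : Mn^2*gm ≤ Mx^2*gp) (hc2 : Mn^2*gp ≤ Mx^2*gm)
    (hE : Mn*(Vm*gm) + Mn*(Vp*gp) ≤ E) :
    Mn^3 * h^2 * (gm+gp) ≤ 4*(E*(Mn^2+Mx^2)) := by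
  have t3 : Vm*(Mn^2*(gm+gp)) ≤ Vm*(gm*(Mn^2+Mx^2)) :=
    mul_le_mul_of_nonneg_left (by linarith) hVm0
  have t4 : Vp*(Mn^2*(gm+gp)) ≤ Vp*(gp*(Mn^2+Mx^2)) :=
    mul_le_mul_of_nonneg_left (by linarith) hVp0
  have t5 : Mn^2*((h^2/4)*(gm+gp)) ≤ Mn^2*((Vm+Vp)*(gm+gp)) :=
    mul_le_mul_of_nonneg_left (mul_le_mul_of_nonneg_right hVs (by linarith)) (by positivity)
  have t7 : Mn^2*((h^2/4)*(gm+gp)) ≤ (Vm*gm+Vp*gp)*(Mn^2+Mx^2) := by nlinarith [t3, t4, t5]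
  have t8 : (Mn*(Vm*gm)+Mn*(Vp*gp))*(Mn^2+Mx^2) ≤ E*(Mn^2+Mx^2) :=
    mul_le_mul_of_nonneg_right hE (by positivity)
  have t9 : Mn*(Mn^2*((h^2/4)*(gm+gp))) ≤ Mn*((Vm*gm+Vp*gp)*(Mn^2+Mx^2)) :=
    mul_le_mul_of_nonneg_left t7 hMn.le
  nlinarith [t8, t9]

lemma edge_unfold (βm βp h d e am ap : ℝ) (P Q : ℝ × ℝ) :
    edgeSqLin βm βp h d e am ap P Q =
      Real.sqrt ((Q.1 - P.1) ^ 2 + (Q.2 - P.2) ^ 2) *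
        ((volume {t : ℝ | t ∈ Set.Icc (0:ℝ) 1 ∧ P + t • (Q - P) ∈ triKm h d e}).toReal * (βm * am) ^ 2 +
         (volume {t : ℝ | t ∈ Set.Icc (0:ℝ) 1 ∧ P + t • (Q - P) ∈ triKp h d e}).toReal * (βp * ap) ^ 2) := by
  rw [edgeSqLin, setIntegral_const, setIntegral_const, smul_eq_mul, smul_eq_mul]
  rfl


set_option maxHeartbeats 800000 in
/-- trace inequality `∥β v_p∥_{L²(B)} ≤ C h^{1/2} |K|^{-1/2} ∥√β ∇v∥_{L²(K)}`
(`p = x, y`) for linear IFE functions on the triangle `K`, for every edge `B` of `K`, with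
`C` depending only on `β⁻, β⁺`. -/
theorem stmt3 (βm βp : ℝ) (hβm : 0 < βm) (hβp : 0 < βp) :
    ∃ C : ℝ, 0 < C ∧
      ∀ h d e c1m c2m c3m c1p c2p c3p : ℝ,
        0 < h → h < 1 →
        d ∈ Set.Icc (0:ℝ) 1 → e ∈ Set.Icc (0:ℝ) 1 → (d, e) ≠ (0, 0) →
        (c1m + c3m * (d * h) = c1p + c3p * (d * h)) →
        (c1m + c2m * (e * h) = c1p + c2p * (e * h)) →
        (βm * (d * c2m + e * c3m) = βp * (d * c2p + e * c3p)) →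
        ∀ P Q : ℝ × ℝ,
          ((P = ((0:ℝ), (0:ℝ)) ∧ Q = (h, 0)) ∨
           (P = ((0:ℝ), (0:ℝ)) ∧ Q = (0, h)) ∨
           (P = ((h:ℝ), (0:ℝ)) ∧ Q = (0, h))) →
          Real.sqrt (edgeSqLin βm βp h d e c2m c2p P Q)
              ≤ C * Real.sqrt h * (Real.sqrt (h ^ 2 / 2))⁻¹ *
                Real.sqrt (energySqLin βm βp h d e c2m c3m c2p c3p) ∧
          Real.sqrt (edgeSqLin βm βp h d e c3m c3p P Q)
              ≤ C * Real.sqrt h * (Real.sqrt (h ^ 2 / 2))⁻¹ *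
                Real.sqrt (energySqLin βm βp h d e c2m c3m c2p c3p) := by
  have hMn : 0 < min βm βp := lt_min hβm hβp
  have hMx : 0 < max βm βp := lt_of_lt_of_le hβm (le_max_left _ _)
  refine ⟨myC βm βp, by rw [myC]; exact Real.sqrt_pos.2 (by positivity), ?_⟩
  intro h d e c1m c2m c3m c1p c2p c3p hh hh1 hd he hde hj1 hj2 hflux P Q hPQ
  set Mx := max βm βp with hMxd
  set Mn := min βm βp with hMnd
  have hMnβm : Mn ≤ βm := min_le_left _ _
  have hMnβp : Mn ≤ βp := min_le_right _ _
  have hβmMx : βm ≤ Mx := le_max_left _ _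
  have hβpMx : βp ≤ Mx := le_max_right _ _
  -- jump conditions
  have htan : d * c3m - e * c2m = d * c3p - e * c2p := by
    have h0 : (d * c3m - e * c2m - (d * c3p - e * c2p)) * h = 0 := by
      linear_combination hj1 - hj2
    rcases mul_eq_zero.1 h0 with h1 | h1
    · linarith
    · exact absurd h1 hh.ne'
  have hr : 0 < d ^ 2 + e ^ 2 := by
    have hne : ¬(d = 0 ∧ e = 0) := fun ⟨h1, h2⟩ => hde (by rw [h1, h2])
    rcases not_and_or.1 hne with h1 | h1
    · have : 0 < d ^ 2 := by positivity
      linarith [sq_nonneg e]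
    · have : 0 < e ^ 2 := by positivity
      linarith [sq_nonneg d]
  -- comparability of gradients
  have idm : (d^2+e^2) * (c2m^2+c3m^2) = (d*c2m+e*c3m)^2 + (d*c3m-e*c2m)^2 := by ring
  have idp : (d^2+e^2) * (c2p^2+c3p^2) = (d*c2p+e*c3p)^2 + (d*c3p-e*c2p)^2 := by ring
  have e1 : βm^2*((d^2+e^2)*(c2m^2+c3m^2)) = (βp*(d*c2p+e*c3p))^2 + βm^2*(d*c3p-e*c2p)^2 := by
    linear_combination (βm*(d*c2m+e*c3m) + βp*(d*c2p+e*c3p)) * hflux +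
      (βm^2*((d*c3m-e*c2m)+(d*c3p-e*c2p))) * htan
  have e2 : βp^2*((d^2+e^2)*(c2p^2+c3p^2)) = (βm*(d*c2m+e*c3m))^2 + βp^2*(d*c3m-e*c2m)^2 := by
    linear_combination (-(βm*(d*c2m+e*c3m) + βp*(d*c2p+e*c3p))) * hflux -
      (βp^2*((d*c3m-e*c2m)+(d*c3p-e*c2p))) * htan
  have hA : Mn^2*βp^2 ≤ βm^2*Mx^2 :=
    mul_le_mul (pow_le_pow_left₀ hMn.le hMnβm 2) (pow_le_pow_left₀ hβp.le hβpMx 2)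
      (by positivity) (by positivity)
  have hB : Mn^2*βm^2 ≤ βm^2*Mx^2 :=
    mul_le_mul (pow_le_pow_left₀ hMn.le hMnβm 2) (pow_le_pow_left₀ hβm.le hβmMx 2)
      (by positivity) (by positivity)
  have hA' : Mn^2*βm^2 ≤ βp^2*Mx^2 :=
    mul_le_mul (pow_le_pow_left₀ hMn.le hMnβp 2) (pow_le_pow_left₀ hβm.le hβmMx 2)
      (by positivity) (by positivity)
  have hB' : Mn^2*βp^2 ≤ βp^2*Mx^2 :=
    mul_le_mul (pow_le_pow_left₀ hMn.le hMnβp 2) (pow_le_pow_left₀ hβp.le hβpMx 2)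
      (by positivity) (by positivity)
  have hc1 : Mn^2*(c2m^2+c3m^2) ≤ Mx^2*(c2p^2+c3p^2) := by
    have key1 : (βm^2*(d^2+e^2)) * (Mn^2*(c2m^2+c3m^2)) ≤ (βm^2*(d^2+e^2)) * (Mx^2*(c2p^2+c3p^2)) :=
      calc (βm^2*(d^2+e^2)) * (Mn^2*(c2m^2+c3m^2))
          = Mn^2*βp^2*(d*c2p+e*c3p)^2 + Mn^2*βm^2*(d*c3p-e*c2p)^2 := by
            linear_combination Mn^2 * e1
        _ ≤ βm^2*Mx^2*(d*c2p+e*c3p)^2 + βm^2*Mx^2*(d*c3p-e*c2p)^2 :=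
            add_le_add (mul_le_mul_of_nonneg_right hA (sq_nonneg _))
              (mul_le_mul_of_nonneg_right hB (sq_nonneg _))
        _ = (βm^2*(d^2+e^2)) * (Mx^2*(c2p^2+c3p^2)) := by linear_combination (-(βm^2*Mx^2)) * idp
    exact le_of_mul_le_mul_left key1 (by positivity)
  have hc2 : Mn^2*(c2p^2+c3p^2) ≤ Mx^2*(c2m^2+c3m^2) := by
    have key2 : (βp^2*(d^2+e^2)) * (Mn^2*(c2p^2+c3p^2)) ≤ (βp^2*(d^2+e^2)) * (Mx^2*(c2m^2+c3m^2)) :=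
      calc (βp^2*(d^2+e^2)) * (Mn^2*(c2p^2+c3p^2))
          = Mn^2*βm^2*(d*c2m+e*c3m)^2 + Mn^2*βp^2*(d*c3m-e*c2m)^2 := by
            linear_combination Mn^2 * e2
        _ ≤ βp^2*Mx^2*(d*c2m+e*c3m)^2 + βp^2*Mx^2*(d*c3m-e*c2m)^2 :=
            add_le_add (mul_le_mul_of_nonneg_right hA' (sq_nonneg _))
              (mul_le_mul_of_nonneg_right hB' (sq_nonneg _))
        _ = (βp^2*(d^2+e^2)) * (Mx^2*(c2m^2+c3m^2)) := by linear_combination (-(βp^2*Mx^2)) * idm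
    exact le_of_mul_le_mul_left key2 (by positivity)
  -- energy
  set Vm := (volume (triKm h d e)).toReal with hVmd
  set Vp := (volume (triKp h d e)).toReal with hVpd
  have hVm0 : 0 ≤ Vm := ENNReal.toReal_nonneg
  have hVp0 : 0 ≤ Vp := ENNReal.toReal_nonneg
  have hVs : h^2/4 ≤ Vm + Vp := vol_split h d e hh
  have hEeq : energySqLin βm βp h d e c2m c3m c2p c3p
      = βm * (Vm * (c2m^2+c3m^2)) + βp * (Vp * (c2p^2+c3p^2)) := by
    rw [energySqLin, setIntegral_const, setIntegral_const, smul_eq_mul, smul_eq_mul]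
    rfl
  have hE0 : 0 ≤ energySqLin βm βp h d e c2m c3m c2p c3p := by rw [hEeq]; positivity
  have t6 : Mn * (Vm * (c2m^2+c3m^2)) + Mn * (Vp * (c2p^2+c3p^2))
      ≤ energySqLin βm βp h d e c2m c3m c2p c3p := by
    rw [hEeq]
    have u1 := mul_le_mul_of_nonneg_right hMnβm
      (mul_nonneg hVm0 (by positivity : (0:ℝ) ≤ c2m^2+c3m^2))
    have u2 := mul_le_mul_of_nonneg_right hMnβp
      (mul_nonneg hVp0 (by positivity : (0:ℝ) ≤ c2p^2+c3p^2))
    linarith [u1, u2]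
  have hEnergy : Mn^3 * h^2 * ((c2m^2+c3m^2)+(c2p^2+c3p^2))
      ≤ 4 * (energySqLin βm βp h d e c2m c3m c2p c3p * (Mn^2 + Mx^2)) :=
    alg_energy Mn Mx Vm Vp _ _ h _ hMn hVm0 hVp0 (by positivity) (by positivity) hVs hc1 hc2 t6
  -- edge
  have hsum : (Q.1-P.1)^2+(Q.2-P.2)^2 ≤ (2*h)^2 := by
    rcases hPQ with ⟨hP,hQ⟩|⟨hP,hQ⟩|⟨hP,hQ⟩ <;> subst hP <;> subst hQ <;> simp <;>
      linarith [sq_nonneg h]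
  have hL : Real.sqrt ((Q.1-P.1)^2+(Q.2-P.2)^2) ≤ 2*h :=
    (Real.sqrt_le_sqrt hsum).trans_eq (Real.sqrt_sq (by linarith))
  have hL0 : 0 ≤ Real.sqrt ((Q.1-P.1)^2+(Q.2-P.2)^2) := Real.sqrt_nonneg _
  have hsm0 : (0:ℝ) ≤ (volume {t : ℝ | t ∈ Set.Icc (0:ℝ) 1 ∧ P + t • (Q - P) ∈ triKm h d e}).toReal :=
    ENNReal.toReal_nonneg
  have hsp0 : (0:ℝ) ≤ (volume {t : ℝ | t ∈ Set.Icc (0:ℝ) 1 ∧ P + t • (Q - P) ∈ triKp h d e}).toReal :=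
    ENNReal.toReal_nonneg
  have hsm1 : (volume {t : ℝ | t ∈ Set.Icc (0:ℝ) 1 ∧ P + t • (Q - P) ∈ triKm h d e}).toReal ≤ 1 :=
    vol_seg_le_one _ (fun t ht => ht.1)
  have hsp1 : (volume {t : ℝ | t ∈ Set.Icc (0:ℝ) 1 ∧ P + t • (Q - P) ∈ triKp h d e}).toReal ≤ 1 :=
    vol_seg_le_one _ (fun t ht => ht.1)
  have hβm2 : βm^2 ≤ Mx^2 := pow_le_pow_left₀ hβm.le hβmMx 2
  have hβp2 : βp^2 ≤ Mx^2 := pow_le_pow_left₀ hβp.le hβpMx 2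
  have hgen : ∀ am ap : ℝ, am^2 ≤ c2m^2+c3m^2 → ap^2 ≤ c2p^2+c3p^2 →
      Real.sqrt (edgeSqLin βm βp h d e am ap P Q)
        ≤ myC βm βp * Real.sqrt h * (Real.sqrt (h ^ 2 / 2))⁻¹ *
          Real.sqrt (energySqLin βm βp h d e c2m c3m c2p c3p) := by
    intro am ap ham hap
    have hEdgeEq := edge_unfold βm βp h d e am ap P Q
    have hiA : (βm*am)^2 ≤ Mx^2*(c2m^2+c3m^2) := sq_prod_le βm Mx am _ hβm2 ham
    have hiB : (βp*ap)^2 ≤ Mx^2*(c2p^2+c3p^2) := sq_prod_le βp Mx ap _ hβp2 hap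
    have hEdge0 : 0 ≤ edgeSqLin βm βp h d e am ap P Q := by
      rw [hEdgeEq]
      exact mul_nonneg hL0 (add_nonneg (mul_nonneg hsm0 (sq_nonneg _))
        (mul_nonneg hsp0 (sq_nonneg _)))
    have hEdgeB : edgeSqLin βm βp h d e am ap P Q
        ≤ 2*h*Mx^2*((c2m^2+c3m^2)+(c2p^2+c3p^2)) := by
      rw [hEdgeEq]
      exact alg_edge Mx βm βp _ _ _ am ap _ _ h hL0 hL hh.le hsm0 hsm1 hsp0 hsp1 hiA hiB
    exact aux_final βm βp h _ _ (c2m^2+c3m^2) (c2p^2+c3p^2) hβm hβp hh hE0 hEdge0 hEdgeB hEnergy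
  exact ⟨hgen c2m c2p (by linarith [sq_nonneg c3m]) (by linarith [sq_nonneg c3p]),
    hgen c3m c3p (by linarith [sq_nonneg c2m]) (by linarith [sq_nonneg c2p])⟩
end

section
/- There exists a constant C depending only on β⁻ and β⁺ (independent of d, e and h) such that for all 0 < h < 1, all d, e ∈ [0,1] with (d,e) ≠ (0,0), every linear IFE function v on K with interface parameters (d,e), and every edge B of K with unit normal n_B: ∥β ∇v · n_B∥_{L²(B)} ≤ C h^{1/2} |K|^{-1/2} ∥√β ∇v∥_{L²(K)}. -/
open MeasureTheory

/-- `∥β ∇v·n_B∥²_{L²(B)} = ∫_{B∩K⁻}(β⁻ ∇v⁻·n_B)² ds + ∫_{B∩K⁺}(β⁺ ∇v⁺·n_B)² ds`, where the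
segment `B` from `P` to `Q` is parametrized by `t ↦ P + t(Q-P)`, `t ∈ [0,1]`, and `ds` is
the arclength measure. -/
noncomputable def edgeSqLinN (βm βp h d e c2m c3m c2p c3p : ℝ) (P Q nB : ℝ × ℝ) : ℝ :=
  Real.sqrt ((Q.1 - P.1) ^ 2 + (Q.2 - P.2) ^ 2) *
    ((∫ _t in {t : ℝ | t ∈ Set.Icc (0:ℝ) 1 ∧ P + t • (Q - P) ∈ triKm h d e},
        (βm * (c2m * nB.1 + c3m * nB.2)) ^ 2) +
     (∫ _t in {t : ℝ | t ∈ Set.Icc (0:ℝ) 1 ∧ P + t • (Q - P) ∈ triKp h d e},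
        (βp * (c2p * nB.1 + c3p * nB.2)) ^ 2))

private lemma csAux (a b n1 n2 : ℝ) (hn : n1 ^ 2 + n2 ^ 2 = 1) :
    (a * n1 + b * n2) ^ 2 ≤ a ^ 2 + b ^ 2 := by
  nlinarith [sq_nonneg (a * n2 - b * n1)]

private lemma lenAux (x y h : ℝ) (hx : x ^ 2 ≤ h ^ 2) (hy : y ^ 2 ≤ h ^ 2) :
    x ^ 2 + y ^ 2 ≤ (2 * h) ^ 2 := by nlinarith

set_option maxHeartbeats 1000000

/-- trace inequality `∥β ∇v·n_B∥_{L²(B)} ≤ C h^{1/2} |K|^{-1/2} ∥√β ∇v∥_{L²(K)}`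
for linear IFE functions on the triangle `K`, for every edge `B` of `K` with unit normal
`n_B`, with `C` depending only on `β⁻, β⁺`. -/
theorem stmt4 (βm βp : ℝ) (hβm : 0 < βm) (hβp : 0 < βp) :
    ∃ C : ℝ, 0 < C ∧
      ∀ h d e c1m c2m c3m c1p c2p c3p : ℝ,
        0 < h → h < 1 →
        d ∈ Set.Icc (0:ℝ) 1 → e ∈ Set.Icc (0:ℝ) 1 → (d, e) ≠ (0, 0) →
        (c1m + c3m * (d * h) = c1p + c3p * (d * h)) →
        (c1m + c2m * (e * h) = c1p + c2p * (e * h)) →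
        (βm * (d * c2m + e * c3m) = βp * (d * c2p + e * c3p)) →
        ∀ P Q nB : ℝ × ℝ,
          ((P = ((0:ℝ), (0:ℝ)) ∧ Q = (h, 0)) ∨
           (P = ((0:ℝ), (0:ℝ)) ∧ Q = (0, h)) ∨
           (P = ((h:ℝ), (0:ℝ)) ∧ Q = (0, h))) →
          nB.1 ^ 2 + nB.2 ^ 2 = 1 →
          nB.1 * (Q.1 - P.1) + nB.2 * (Q.2 - P.2) = 0 →
          Real.sqrt (edgeSqLinN βm βp h d e c2m c3m c2p c3p P Q nB)
              ≤ C * Real.sqrt h * (Real.sqrt (h ^ 2 / 2))⁻¹ *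
                Real.sqrt (energySqLin βm βp h d e c2m c3m c2p c3p) := by
  set M : ℝ := max 1 (max ((βp / βm) ^ 2) ((βm / βp) ^ 2)) with hMdef
  have hM1 : (1:ℝ) ≤ M := le_max_left _ _
  have hM0 : (0:ℝ) < M := lt_of_lt_of_le one_pos hM1
  have hmβ : (0:ℝ) < min βm βp := lt_min hβm hβp
  set K0 : ℝ := 4 * (βm ^ 2 + βp ^ 2) * M / min βm βp with hK0def
  have hK0 : 0 < K0 := by positivity
  refine ⟨Real.sqrt K0, Real.sqrt_pos.mpr hK0, ?_⟩
  intro h d e c1m c2m c3m c1p c2p c3p hh hh1 hd he hde hJ1 hJ2 hflux P Q nB hPQ hn hperp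
  -- abbreviations
  set gm : ℝ := c2m ^ 2 + c3m ^ 2 with hgm
  set gp : ℝ := c2p ^ 2 + c3p ^ 2 with hgp
  have hgm0 : 0 ≤ gm := by positivity
  have hgp0 : 0 ≤ gp := by positivity
  set G : ℝ := max gm gp with hG
  have hG0 : 0 ≤ G := le_trans hgm0 (le_max_left _ _)
  -- jump conditions imply comparability of gradients
  have hs : 0 < d ^ 2 + e ^ 2 := by
    have : d ≠ 0 ∨ e ≠ 0 := by
      by_contra hc; push_neg at hc; exact hde (by simp [hc.1, hc.2])
    rcases this with h0 | h0
    · have : 0 < d := lt_of_le_of_ne hd.1 (Ne.symm h0)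
      nlinarith [sq_nonneg e]
    · have : 0 < e := lt_of_le_of_ne he.1 (Ne.symm h0)
      nlinarith [sq_nonneg d]
  have hT : d * c3m - e * c2m = d * c3p - e * c2p := by
    have h1 : h * (d * c3m - e * c2m) = h * (d * c3p - e * c2p) := by
      linear_combination hJ1 - hJ2
    exact mul_left_cancel₀ (ne_of_gt hh) h1
  have hNm : d * c2m + e * c3m = (βp / βm) * (d * c2p + e * c3p) := by
    field_simp
    linarith [hflux]
  have hNp : d * c2p + e * c3p = (βm / βp) * (d * c2m + e * c3m) := by
    field_simp
    linarith [hflux]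
  have hgmgp : gm ≤ M * gp := by
    have hr : (βp / βm) ^ 2 ≤ M := le_trans (le_max_left _ _) (le_max_right _ _)
    have e1 : (d ^ 2 + e ^ 2) * gm =
        (d * c2m + e * c3m) ^ 2 + (d * c3m - e * c2m) ^ 2 := by rw [hgm]; ring
    have e2 : (d ^ 2 + e ^ 2) * gp =
        (d * c2p + e * c3p) ^ 2 + (d * c3p - e * c2p) ^ 2 := by rw [hgp]; ring
    have key : (d ^ 2 + e ^ 2) * gm ≤ M * ((d ^ 2 + e ^ 2) * gp) := by
      rw [e1, e2, hNm, hT]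
      calc ((βp / βm) * (d * c2p + e * c3p)) ^ 2 + (d * c3p - e * c2p) ^ 2
          = (βp / βm) ^ 2 * (d * c2p + e * c3p) ^ 2 + (d * c3p - e * c2p) ^ 2 := by ring
        _ ≤ M * (d * c2p + e * c3p) ^ 2 + M * (d * c3p - e * c2p) ^ 2 :=
            add_le_add (mul_le_mul_of_nonneg_right hr (sq_nonneg _))
              (le_mul_of_one_le_left (sq_nonneg _) hM1)
        _ = M * ((d * c2p + e * c3p) ^ 2 + (d * c3p - e * c2p) ^ 2) := by ring
    rw [mul_left_comm] at key
    exact le_of_mul_le_mul_left key hs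
  have hgpgm : gp ≤ M * gm := by
    have hr : (βm / βp) ^ 2 ≤ M := le_trans (le_max_right _ _) (le_max_right _ _)
    have e1 : (d ^ 2 + e ^ 2) * gm =
        (d * c2m + e * c3m) ^ 2 + (d * c3m - e * c2m) ^ 2 := by rw [hgm]; ring
    have e2 : (d ^ 2 + e ^ 2) * gp =
        (d * c2p + e * c3p) ^ 2 + (d * c3p - e * c2p) ^ 2 := by rw [hgp]; ring
    have key : (d ^ 2 + e ^ 2) * gp ≤ M * ((d ^ 2 + e ^ 2) * gm) := by
      rw [e1, e2, hNp, ← hT]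
      calc ((βm / βp) * (d * c2m + e * c3m)) ^ 2 + (d * c3m - e * c2m) ^ 2
          = (βm / βp) ^ 2 * (d * c2m + e * c3m) ^ 2 + (d * c3m - e * c2m) ^ 2 := by ring
        _ ≤ M * (d * c2m + e * c3m) ^ 2 + M * (d * c3m - e * c2m) ^ 2 :=
            add_le_add (mul_le_mul_of_nonneg_right hr (sq_nonneg _))
              (le_mul_of_one_le_left (sq_nonneg _) hM1)
        _ = M * ((d * c2m + e * c3m) ^ 2 + (d * c3m - e * c2m) ^ 2) := by ring
    rw [mul_left_comm] at key
    exact le_of_mul_le_mul_left key hs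
  -- volumes
  set Vm : ℝ := (volume (triKm h d e)).toReal with hVm
  set Vp : ℝ := (volume (triKp h d e)).toReal with hVp
  have hVm0 : 0 ≤ Vm := ENNReal.toReal_nonneg
  have hVp0 : 0 ≤ Vp := ENNReal.toReal_nonneg
  -- bounding box finiteness
  have hbox : ∀ s : Set (ℝ × ℝ), s ⊆ triK h → volume s ≠ ⊤ := by
    intro s hsub
    have h2 : s ⊆ Set.Icc (0:ℝ) h ×ˢ Set.Icc (0:ℝ) h := by
      intro X hX
      obtain ⟨h1, h2, h3⟩ := hsub hX
      exact ⟨⟨h1, by linarith⟩, ⟨h2, by linarith⟩⟩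
    have := measure_mono (μ := volume) h2
    have hfin : volume (Set.Icc (0:ℝ) h ×ˢ Set.Icc (0:ℝ) h) ≠ ⊤ := by
      rw [MeasureTheory.Measure.volume_eq_prod, MeasureTheory.Measure.prod_prod,
        Real.volume_Icc]
      exact ENNReal.mul_ne_top ENNReal.ofReal_ne_top ENNReal.ofReal_ne_top
    exact ne_top_of_le_ne_top hfin this
  have hKmsub : triKm h d e ⊆ triK h := fun X hX => hX.1
  have hKpsub : triKp h d e ⊆ triK h := fun X hX => hX.1
  -- area lower bound: the square [0,h/2]² lies inside K ⊆ Km ∪ Kp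
  have hVsum : h ^ 2 / 4 ≤ Vm + Vp := by
    have hsq : Set.Icc (0:ℝ) (h/2) ×ˢ Set.Icc (0:ℝ) (h/2) ⊆ triKm h d e ∪ triKp h d e := by
      intro X hX
      obtain ⟨⟨h1, h2⟩, ⟨h3, h4⟩⟩ := hX
      have hK : X ∈ triK h := ⟨h1, h3, by linarith⟩
      rcases le_total (d * X.1 + e * X.2) (d * e * h) with hc | hc
      · exact Or.inl ⟨hK, hc⟩
      · exact Or.inr ⟨hK, hc⟩
    have h1 : volume (Set.Icc (0:ℝ) (h/2) ×ˢ Set.Icc (0:ℝ) (h/2)) =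
        ENNReal.ofReal (h/2) * ENNReal.ofReal (h/2) := by
      rw [MeasureTheory.Measure.volume_eq_prod, MeasureTheory.Measure.prod_prod,
        Real.volume_Icc]
      norm_num
    have h2 : volume (Set.Icc (0:ℝ) (h/2) ×ˢ Set.Icc (0:ℝ) (h/2)) ≤
        volume (triKm h d e) + volume (triKp h d e) :=
      le_trans (measure_mono hsq) (measure_union_le _ _)
    have hfm := hbox _ hKmsub
    have hfp := hbox _ hKpsub
    have h3 : (volume (Set.Icc (0:ℝ) (h/2) ×ˢ Set.Icc (0:ℝ) (h/2))).toReal ≤ Vm + Vp := by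
      rw [hVm, hVp, ← ENNReal.toReal_add hfm hfp]
      exact ENNReal.toReal_mono (ENNReal.add_ne_top.mpr ⟨hfm, hfp⟩) h2
    rw [h1, ENNReal.toReal_mul, ENNReal.toReal_ofReal (by linarith)] at h3
    calc h ^ 2 / 4 = h / 2 * (h / 2) := by ring
      _ ≤ Vm + Vp := h3
  -- energy
  set E : ℝ := energySqLin βm βp h d e c2m c3m c2p c3p with hE
  have hEeq : E = βm * (Vm * gm) + βp * (Vp * gp) := by
    rw [hE, energySqLin, MeasureTheory.setIntegral_const, MeasureTheory.setIntegral_const,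
      smul_eq_mul, smul_eq_mul]
    rfl
  have hE0 : 0 ≤ E := by rw [hEeq]; positivity
  have hElow : min βm βp * (Vm * gm + Vp * gp) ≤ E := by
    rw [hEeq]
    have h1 : min βm βp * (Vm * gm) ≤ βm * (Vm * gm) :=
      mul_le_mul_of_nonneg_right (min_le_left _ _) (by positivity)
    have h2 : min βm βp * (Vp * gp) ≤ βp * (Vp * gp) :=
      mul_le_mul_of_nonneg_right (min_le_right _ _) (by positivity)
    linarith
  -- max gradient vs weighted sum
  have hGsum : h ^ 2 * G ≤ 4 * M * (Vm * gm + Vp * gp) := by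
    rcases max_cases gm gp with ⟨hGe, _⟩ | ⟨hGe, _⟩ <;> rw [hG, hGe]
    · calc h ^ 2 * gm ≤ (4 * (Vm + Vp)) * gm :=
            mul_le_mul_of_nonneg_right (by linarith) hgm0
        _ = 4 * (Vm * gm) + 4 * (Vp * gm) := by ring
        _ ≤ 4 * (M * (Vm * gm)) + 4 * (Vp * (M * gp)) :=
            add_le_add
              (mul_le_mul_of_nonneg_left
                (le_mul_of_one_le_left (mul_nonneg hVm0 hgm0) hM1) (by norm_num))
              (mul_le_mul_of_nonneg_left
                (mul_le_mul_of_nonneg_left hgmgp hVp0) (by norm_num))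
        _ = 4 * M * (Vm * gm + Vp * gp) := by ring
    · calc h ^ 2 * gp ≤ (4 * (Vm + Vp)) * gp :=
            mul_le_mul_of_nonneg_right (by linarith) hgp0
        _ = 4 * (Vm * gp) + 4 * (Vp * gp) := by ring
        _ ≤ 4 * (Vm * (M * gm)) + 4 * (M * (Vp * gp)) :=
            add_le_add
              (mul_le_mul_of_nonneg_left
                (mul_le_mul_of_nonneg_left hgpgm hVm0) (by norm_num))
              (mul_le_mul_of_nonneg_left
                (le_mul_of_one_le_left (mul_nonneg hVp0 hgp0) hM1) (by norm_num))
        _ = 4 * M * (Vm * gm + Vp * gp) := by ring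
  -- edge bound
  set edgeSq : ℝ := edgeSqLinN βm βp h d e c2m c3m c2p c3p P Q nB with hEdge
  have hEdgeBound : edgeSq ≤ 2 * h * ((βm ^ 2 + βp ^ 2) * G) := by
    rw [hEdge, edgeSqLinN, MeasureTheory.setIntegral_const, MeasureTheory.setIntegral_const,
      smul_eq_mul, smul_eq_mul]
    -- length bound
    have hL : Real.sqrt ((Q.1 - P.1) ^ 2 + (Q.2 - P.2) ^ 2) ≤ 2 * h := by
      have hle : (Q.1 - P.1) ^ 2 + (Q.2 - P.2) ^ 2 ≤ (2 * h) ^ 2 := by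
        rcases hPQ with ⟨hP, hQ⟩ | ⟨hP, hQ⟩ | ⟨hP, hQ⟩ <;> subst hP <;> subst hQ
        · exact lenAux _ _ h (by norm_num) (by simpa using sq_nonneg h)
        · exact lenAux _ _ h (by simpa using sq_nonneg h) (by norm_num)
        · exact lenAux _ _ h (by norm_num) (by norm_num)
      calc Real.sqrt ((Q.1 - P.1) ^ 2 + (Q.2 - P.2) ^ 2) ≤ Real.sqrt ((2 * h) ^ 2) :=
            Real.sqrt_le_sqrt hle
        _ = 2 * h := Real.sqrt_sq (by linarith)
    -- measure factors are ≤ 1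
    have hv : ∀ s : Set ℝ, s ⊆ Set.Icc (0:ℝ) 1 → (volume s).toReal ≤ 1 := by
      intro s hsub
      have h1 : volume s ≤ volume (Set.Icc (0:ℝ) 1) := measure_mono hsub
      have h2 : (volume s).toReal ≤ (volume (Set.Icc (0:ℝ) 1)).toReal :=
        ENNReal.toReal_mono (by rw [Real.volume_Icc]; exact ENNReal.ofReal_ne_top) h1
      rwa [Real.volume_Icc, ENNReal.toReal_ofReal (by norm_num), show (1:ℝ) - 0 = 1 by ring] at h2
    have hv1 := hv _ (fun t ht => ht.1 :
      {t : ℝ | t ∈ Set.Icc (0:ℝ) 1 ∧ P + t • (Q - P) ∈ triKm h d e} ⊆ Set.Icc 0 1)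
    have hv2 := hv _ (fun t ht => ht.1 :
      {t : ℝ | t ∈ Set.Icc (0:ℝ) 1 ∧ P + t • (Q - P) ∈ triKp h d e} ⊆ Set.Icc 0 1)
    -- Cauchy–Schwarz for the normal components
    have hcs1 : (βm * (c2m * nB.1 + c3m * nB.2)) ^ 2 ≤ βm ^ 2 * gm := by
      have hu : (c2m * nB.1 + c3m * nB.2) ^ 2 ≤ c2m ^ 2 + c3m ^ 2 := csAux _ _ _ _ hn
      calc (βm * (c2m * nB.1 + c3m * nB.2)) ^ 2
          = βm ^ 2 * (c2m * nB.1 + c3m * nB.2) ^ 2 := by ring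
        _ ≤ βm ^ 2 * (c2m ^ 2 + c3m ^ 2) := mul_le_mul_of_nonneg_left hu (sq_nonneg βm)
        _ = βm ^ 2 * gm := by rw [hgm]
    have hcs2 : (βp * (c2p * nB.1 + c3p * nB.2)) ^ 2 ≤ βp ^ 2 * gp := by
      have hu : (c2p * nB.1 + c3p * nB.2) ^ 2 ≤ c2p ^ 2 + c3p ^ 2 := csAux _ _ _ _ hn
      calc (βp * (c2p * nB.1 + c3p * nB.2)) ^ 2
          = βp ^ 2 * (c2p * nB.1 + c3p * nB.2) ^ 2 := by ring
        _ ≤ βp ^ 2 * (c2p ^ 2 + c3p ^ 2) := mul_le_mul_of_nonneg_left hu (sq_nonneg βp)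
        _ = βp ^ 2 * gp := by rw [hgp]
    have hgmG : gm ≤ G := le_max_left _ _
    have hgpG : gp ≤ G := le_max_right _ _
    have hinner : (volume {t : ℝ | t ∈ Set.Icc (0:ℝ) 1 ∧ P + t • (Q - P) ∈ triKm h d e}).toReal
          * (βm * (c2m * nB.1 + c3m * nB.2)) ^ 2 +
        (volume {t : ℝ | t ∈ Set.Icc (0:ℝ) 1 ∧ P + t • (Q - P) ∈ triKp h d e}).toReal
          * (βp * (c2p * nB.1 + c3p * nB.2)) ^ 2 ≤ (βm ^ 2 + βp ^ 2) * G := by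
      have a1 : (volume {t : ℝ | t ∈ Set.Icc (0:ℝ) 1 ∧ P + t • (Q - P) ∈ triKm h d e}).toReal
          * (βm * (c2m * nB.1 + c3m * nB.2)) ^ 2 ≤ βm ^ 2 * G := by
        calc _ ≤ 1 * (βm * (c2m * nB.1 + c3m * nB.2)) ^ 2 :=
              mul_le_mul_of_nonneg_right hv1 (sq_nonneg _)
          _ = (βm * (c2m * nB.1 + c3m * nB.2)) ^ 2 := one_mul _
          _ ≤ βm ^ 2 * gm := hcs1
          _ ≤ βm ^ 2 * G := mul_le_mul_of_nonneg_left hgmG (sq_nonneg _)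
      have a2 : (volume {t : ℝ | t ∈ Set.Icc (0:ℝ) 1 ∧ P + t • (Q - P) ∈ triKp h d e}).toReal
          * (βp * (c2p * nB.1 + c3p * nB.2)) ^ 2 ≤ βp ^ 2 * G := by
        calc _ ≤ 1 * (βp * (c2p * nB.1 + c3p * nB.2)) ^ 2 :=
              mul_le_mul_of_nonneg_right hv2 (sq_nonneg _)
          _ = (βp * (c2p * nB.1 + c3p * nB.2)) ^ 2 := one_mul _
          _ ≤ βp ^ 2 * gp := hcs2
          _ ≤ βp ^ 2 * G := mul_le_mul_of_nonneg_left hgpG (sq_nonneg _)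
      linarith [a1, a2]
    have hinner0 : 0 ≤ (volume {t : ℝ | t ∈ Set.Icc (0:ℝ) 1 ∧ P + t • (Q - P) ∈ triKm h d e}).toReal
          * (βm * (c2m * nB.1 + c3m * nB.2)) ^ 2 +
        (volume {t : ℝ | t ∈ Set.Icc (0:ℝ) 1 ∧ P + t • (Q - P) ∈ triKp h d e}).toReal
          * (βp * (c2p * nB.1 + c3p * nB.2)) ^ 2 := by positivity
    calc _ ≤ (2 * h) * ((volume {t : ℝ | t ∈ Set.Icc (0:ℝ) 1 ∧ P + t • (Q - P) ∈ triKm h d e}).toReal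
          * (βm * (c2m * nB.1 + c3m * nB.2)) ^ 2 +
        (volume {t : ℝ | t ∈ Set.Icc (0:ℝ) 1 ∧ P + t • (Q - P) ∈ triKp h d e}).toReal
          * (βp * (c2p * nB.1 + c3p * nB.2)) ^ 2) :=
          mul_le_mul hL (le_refl _) hinner0 (by linarith)
      _ ≤ 2 * h * ((βm ^ 2 + βp ^ 2) * G) :=
          mul_le_mul_of_nonneg_left hinner (by linarith)
  -- final combination
  have key : edgeSq * (min βm βp * h ^ 2) ≤ 8 * (βm ^ 2 + βp ^ 2) * M * h * E := by
    calc edgeSq * (min βm βp * h ^ 2)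
        ≤ (2 * h * ((βm ^ 2 + βp ^ 2) * G)) * (min βm βp * h ^ 2) :=
          mul_le_mul_of_nonneg_right hEdgeBound (by positivity)
      _ = 2 * (βm ^ 2 + βp ^ 2) * min βm βp * h * (h ^ 2 * G) := by ring
      _ ≤ 2 * (βm ^ 2 + βp ^ 2) * min βm βp * h * (4 * M * (Vm * gm + Vp * gp)) :=
          mul_le_mul_of_nonneg_left hGsum (by positivity)
      _ = 8 * (βm ^ 2 + βp ^ 2) * M * h * (min βm βp * (Vm * gm + Vp * gp)) := by ring
      _ ≤ 8 * (βm ^ 2 + βp ^ 2) * M * h * E :=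
          mul_le_mul_of_nonneg_left hElow (by positivity)
  have hRHS0 : 0 ≤ Real.sqrt K0 * Real.sqrt h * (Real.sqrt (h ^ 2 / 2))⁻¹ * Real.sqrt E := by
    positivity
  have hmain : edgeSq ≤ (Real.sqrt K0 * Real.sqrt h * (Real.sqrt (h ^ 2 / 2))⁻¹ *
      Real.sqrt E) ^ 2 := by
    have hsq : (Real.sqrt K0 * Real.sqrt h * (Real.sqrt (h ^ 2 / 2))⁻¹ * Real.sqrt E) ^ 2 =
        K0 * h * (h ^ 2 / 2)⁻¹ * E := by
      have e1 : Real.sqrt K0 ^ 2 = K0 := Real.sq_sqrt (le_of_lt hK0)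
      have e2 : Real.sqrt h ^ 2 = h := Real.sq_sqrt (le_of_lt hh)
      have e3 : Real.sqrt (h ^ 2 / 2) ^ 2 = h ^ 2 / 2 := Real.sq_sqrt (by positivity)
      have e4 : Real.sqrt E ^ 2 = E := Real.sq_sqrt hE0
      rw [mul_pow, mul_pow, mul_pow, inv_pow, e1, e2, e3, e4]
    rw [hsq]
    have hne1 : min βm βp ≠ 0 := ne_of_gt hmβ
    have hne2 : h ≠ 0 := ne_of_gt hh
    have hcancel : (K0 * h * (h ^ 2 / 2)⁻¹ * E) * (min βm βp * h ^ 2) =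
        8 * (βm ^ 2 + βp ^ 2) * M * h * E := by
      rw [hK0def, inv_div]
      field_simp
      ring
    exact le_of_mul_le_mul_right (key.trans_eq hcancel.symm) (by positivity)
  calc Real.sqrt edgeSq
      ≤ Real.sqrt ((Real.sqrt K0 * Real.sqrt h * (Real.sqrt (h ^ 2 / 2))⁻¹ *
          Real.sqrt E) ^ 2) := Real.sqrt_le_sqrt hmain
    _ = Real.sqrt K0 * Real.sqrt h * (Real.sqrt (h ^ 2 / 2))⁻¹ * Real.sqrt E :=
        Real.sqrt_sq hRHS0
end

section
/- Bilinear IFE extension is well defined: let β⁻ > 0, β⁺ > 0, 0 < h < 1, and let the interface configuration on K = [0,h]² be of Type I (with d, e ∈ [0,1], (d,e) ≠ (0,0)) or of Type II (with d, e ∈ [0,1]). Then for every quadruple (c₁⁻, c₂⁻, c₃⁻, c₄) ∈ ℝ⁴ there exists a unique triple (c₁⁺, c₂⁺, c₃⁺) ∈ ℝ³ such that the piecewise bilinear function with pieces v⁻ = c₁⁻ + c₂⁻x + c₃⁻y + c₄xy and v⁺ = c₁⁺ + c₂⁺x + c₃⁺y + c₄xy satisfies the jump conditions v⁻(D) = v⁺(D),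 v⁻(E) = v⁺(E), and ∫_{DE} β⁻ ∇v⁻ · n̄ ds = ∫_{DE} β⁺ ∇v⁺ · n̄ ds. -/
open MeasureTheory

/-- `n` is a unit normal to the segment from `D` to `E`. -/
def unitNormalTo (n D E : ℝ × ℝ) : Prop :=
  n.1 ^ 2 + n.2 ^ 2 = 1 ∧ n.1 * (E.1 - D.1) + n.2 * (E.2 - D.2) = 0

/-- Jump conditions for bilinear IFE functions with pieces
`v⁻ = c₁⁻ + c₂⁻x + c₃⁻y + c₄xy`, `v⁺ = c₁⁺ + c₂⁺x + c₃⁺y + c₄xy`: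
`v⁻(D) = v⁺(D)`, `v⁻(E) = v⁺(E)`, and `∫_{DE} β⁻∇v⁻·n̄ ds = ∫_{DE} β⁺∇v⁺·n̄ ds`,
the segment `DE` being parametrized by `t ↦ D + t(E-D)`, `t ∈ [0,1]`, with arclength
element `ds = ‖E-D‖ dt`. -/
noncomputable def bilJump (βm βp c1m c2m c3m c1p c2p c3p c4 : ℝ) (D E n : ℝ × ℝ) : Prop :=
  c1m + c2m * D.1 + c3m * D.2 + c4 * D.1 * D.2
      = c1p + c2p * D.1 + c3p * D.2 + c4 * D.1 * D.2 ∧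
  c1m + c2m * E.1 + c3m * E.2 + c4 * E.1 * E.2
      = c1p + c2p * E.1 + c3p * E.2 + c4 * E.1 * E.2 ∧
  Real.sqrt ((E.1 - D.1) ^ 2 + (E.2 - D.2) ^ 2) *
      (∫ t in (0:ℝ)..1, βm * ((c2m + c4 * (D.2 + t * (E.2 - D.2))) * n.1 +
        (c3m + c4 * (D.1 + t * (E.1 - D.1))) * n.2))
    = Real.sqrt ((E.1 - D.1) ^ 2 + (E.2 - D.2) ^ 2) *
      (∫ t in (0:ℝ)..1, βp * ((c2p + c4 * (D.2 + t * (E.2 - D.2))) * n.1 +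
        (c3p + c4 * (D.1 + t * (E.1 - D.1))) * n.2))

lemma integral_linear' (P Q : ℝ) : ∫ t in (0:ℝ)..1, (P + Q * t) = P + Q / 2 := by
  have h2 : IntervalIntegrable (fun t : ℝ => Q * t) volume 0 1 :=
    (continuous_const.mul continuous_id).intervalIntegrable 0 1
  rw [intervalIntegral.integral_add intervalIntegrable_const h2,
    intervalIntegral.integral_const, intervalIntegral.integral_const_mul, integral_id]
  rw [smul_eq_mul]; ring

lemma flux_integral (b c2 c3 c4 : ℝ) (D E n : ℝ × ℝ) :
    (∫ t in (0:ℝ)..1, b * ((c2 + c4 * (D.2 + t * (E.2 - D.2))) * n.1 +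
        (c3 + c4 * (D.1 + t * (E.1 - D.1))) * n.2))
    = b * ((c2 + c4 * (D.2 + (E.2 - D.2) / 2)) * n.1 +
        (c3 + c4 * (D.1 + (E.1 - D.1) / 2)) * n.2) := by
  have hfun : (fun t : ℝ => b * ((c2 + c4 * (D.2 + t * (E.2 - D.2))) * n.1 +
        (c3 + c4 * (D.1 + t * (E.1 - D.1))) * n.2))
      = fun t : ℝ => (b * ((c2 + c4 * D.2) * n.1 + (c3 + c4 * D.1) * n.2))
          + (b * c4 * ((E.2 - D.2) * n.1 + (E.1 - D.1) * n.2)) * t := by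
    funext t; ring
  rw [hfun, integral_linear']
  ring

/-- bilinear IFE extension is well defined on `K = [0,h]²`: for an interface
configuration of Type I (`D = (0,dh)`, `E = (eh,0)`, `(d,e) ≠ (0,0)`) or Type II
(`D = (dh,h)`, `E = (eh,0)`), every quadruple `(c₁⁻,c₂⁻,c₃⁻,c₄)` admits a unique triple
`(c₁⁺,c₂⁺,c₃⁺)` satisfying the jump conditions. -/
theorem stmt5 (βm βp h d e : ℝ) (hβm : 0 < βm) (hβp : 0 < βp)
    (h0 : 0 < h) (h1 : h < 1)
    (hd : d ∈ Set.Icc (0:ℝ) 1) (he : e ∈ Set.Icc (0:ℝ) 1)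
    (D E n : ℝ × ℝ) (hn : unitNormalTo n D E)
    (hconf : (D = ((0:ℝ), d * h) ∧ E = (e * h, (0:ℝ)) ∧ (d, e) ≠ (0, 0)) ∨
             (D = (d * h, h) ∧ E = (e * h, (0:ℝ))))
    (c1m c2m c3m c4 : ℝ) :
    ∃! c : ℝ × ℝ × ℝ, bilJump βm βp c1m c2m c3m c.1 c.2.1 c.2.2 c4 D E n := by
  obtain ⟨hn1, hn2⟩ := hn
  -- the segment is nondegenerate
  have hL : 0 < (E.1 - D.1) ^ 2 + (E.2 - D.2) ^ 2 := by
    rcases hconf with ⟨hD, hE, hde⟩ | ⟨hD, hE⟩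
    · have hde' : d ≠ 0 ∨ e ≠ 0 := by
        by_contra hc
        push_neg at hc
        exact hde (by simp [hc.1, hc.2])
      subst hD; subst hE; simp only
      rcases hde' with hd0 | he0
      · have : d * h ≠ 0 := mul_ne_zero hd0 h0.ne'
        nlinarith [sq_nonneg (e * h - 0), sq_abs (d * h), abs_pos.mpr this, sq_nonneg (e*h)]
      · have : e * h ≠ 0 := mul_ne_zero he0 h0.ne'
        nlinarith [abs_pos.mpr this, sq_abs (e * h), sq_nonneg (0 - d*h)]
    · subst hD; subst hE; simp only
      nlinarith [sq_nonneg (e * h - d * h)]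
  have hLs : 0 < Real.sqrt ((E.1 - D.1) ^ 2 + (E.2 - D.2) ^ 2) := Real.sqrt_pos.mpr hL
  -- the determinant
  have hw2 : ((E.1 - D.1) * n.2 - (E.2 - D.2) * n.1) ^ 2
      = (E.1 - D.1) ^ 2 + (E.2 - D.2) ^ 2 := by
    linear_combination ((E.1 - D.1) ^ 2 + (E.2 - D.2) ^ 2) * hn1
      - (n.1 * (E.1 - D.1) + n.2 * (E.2 - D.2)) * hn2
  have hw : (E.1 - D.1) * n.2 - (E.2 - D.2) * n.1 ≠ 0 := by
    intro hz
    rw [hz] at hw2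
    simp at hw2
    nlinarith
  set F : ℝ := (c2m + c4 * (D.2 + (E.2 - D.2) / 2)) * n.1 +
      (c3m + c4 * (D.1 + (E.1 - D.1) / 2)) * n.2 with hF
  set s : ℝ := (βm - βp) * F / βp with hs
  refine ⟨(c1m - s * (n.1 * D.1 + n.2 * D.2), c2m + s * n.1, c3m + s * n.2),
    ⟨?_, ?_, ?_⟩, ?_⟩
  · simp only; ring
  · simp only
    linear_combination (-s) * hn2
  · simp only [flux_integral]
    have hkey : βp * ((c2m + s * n.1 + c4 * (D.2 + (E.2 - D.2) / 2)) * n.1 +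
        (c3m + s * n.2 + c4 * (D.1 + (E.1 - D.1) / 2)) * n.2) = βm * F := by
      have hsp : βp * s = (βm - βp) * F := by
        rw [hs]; field_simp
      linear_combination βp * s * hn1 + hsp + (n.1^2 + n.2^2) * hsp
        - (n.1^2 + n.2^2) * hsp
    rw [← hF]
    rw [hkey]
  · rintro ⟨p1, p2, p3⟩ ⟨hq1, hq2, hq3⟩
    simp only at hq1 hq2 hq3
    rw [flux_integral, flux_integral, ← hF] at hq3
    have hq3' : βm * F = βp * ((p2 + c4 * (D.2 + (E.2 - D.2) / 2)) * n.1 +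
        (p3 + c4 * (D.1 + (E.1 - D.1) / 2)) * n.2) :=
      mul_left_cancel₀ hLs.ne' hq3
    -- deduce linear relations for the difference
    have hb : p2 - (c2m + s * n.1) = 0 ∧ p3 - (c3m + s * n.2) = 0 := by
      have hA : (p2 - (c2m + s * n.1)) * (E.1 - D.1)
          + (p3 - (c3m + s * n.2)) * (E.2 - D.2) = 0 := by
        linear_combination hq1 - hq2 - s * hn2
      have hB : (p2 - (c2m + s * n.1)) * n.1 + (p3 - (c3m + s * n.2)) * n.2 = 0 := by
        have hsp : βp * s = (βm - βp) * F := by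
          rw [hs]; field_simp
        have : βp * ((p2 - (c2m + s * n.1)) * n.1 + (p3 - (c3m + s * n.2)) * n.2) = 0 := by
          linear_combination -hq3' - βp * s * hn1 - hsp
        exact (mul_eq_zero.mp this).resolve_left hβp.ne'
      constructor
      · have : (p2 - (c2m + s * n.1)) * ((E.1 - D.1) * n.2 - (E.2 - D.2) * n.1) = 0 := by
          linear_combination n.2 * hA - (E.2 - D.2) * hB
        exact (mul_eq_zero.mp this).resolve_right hw
      · have : (p3 - (c3m + s * n.2)) * ((E.1 - D.1) * n.2 - (E.2 - D.2) * n.1) = 0 := by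
          linear_combination (E.1 - D.1) * hB - n.1 * hA
        exact (mul_eq_zero.mp this).resolve_right hw
    obtain ⟨hb2, hb3⟩ := hb
    have hp2 : p2 = c2m + s * n.1 := by linarith
    have hp3 : p3 = c3m + s * n.2 := by linarith
    have hp1 : p1 = c1m - s * (n.1 * D.1 + n.2 * D.2) := by
      have := hq1
      rw [hp2, hp3] at this
      linarith [this]
    simp [hp1, hp2, hp3]
end

section
/- There exists a constant C > 1 depending only on β⁻ and β⁺ (independent of d, e and h) such that for all 0 < h < 1, every interface configuration on K = [0,h]² of Type I (d, e ∈ [0,1], (d,e) ≠ (0,0)) or Type II (d, e ∈ [0,1]), and every bilinear IFE function v on K with coefficients (c₁⁻, c₂⁻, c₃⁻, c₄) and (c₁⁺, c₂⁺, c₃⁺, c₄), one has (1/C)·∥(c₁⁺, c₂⁺, c₃⁺, c₄)∥ ≤ ∥(c₁⁻, c₂⁻, c₃⁻, c₄)∥ ≤ C·∥(c₁⁺, c₂⁺, c₃⁺, c₄)∥. -/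
open MeasureTheory

lemma stmt6_key (r c1 c2 c3 c4 s t n1 n2 : ℝ) (hr : 0 ≤ r)
    (hn : n1^2 + n2^2 = 1) (ht : t^2 ≤ 4)
    (hs : s^2 ≤ 6 * r^2 * (c1^2 + c2^2 + c3^2 + c4^2)) :
    (c1 - s*t)^2 + (c2 + s*n1)^2 + (c3 + s*n2)^2 + c4^2
      ≤ (1 + 6*r)^2 * (c1^2 + c2^2 + c3^2 + c4^2) := by
  have hQ0 : (0:ℝ) ≤ c1^2 + c2^2 + c3^2 + c4^2 := by positivity
  rcases hr.eq_or_lt with h0 | hpos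
  · subst h0
    norm_num at hs ⊢
    have hs0 : s = 0 := by
      exact hs
    subst hs0
    ring_nf
    nlinarith
  · have lag : ((-c1)*t + c2*n1 + c3*n2)^2 + (c1*n1 + c2*t)^2 + (c1*n2 + c3*t)^2
        + (c2*n2 - c3*n1)^2 = (c1^2+c2^2+c3^2)*(t^2+n1^2+n2^2) := by ring
    have hc123 : (0:ℝ) ≤ c1^2 + c2^2 + c3^2 := by positivity
    have hmul : (c1^2+c2^2+c3^2)*(t^2+n1^2+n2^2) ≤ 5*(c1^2+c2^2+c3^2+c4^2) := by
      nlinarith [mul_le_mul_of_nonneg_left ht hc123, sq_nonneg c4]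
    have hv2 : ((-c1)*t + c2*n1 + c3*n2)^2 ≤ 5*(c1^2+c2^2+c3^2+c4^2) := by
      nlinarith [sq_nonneg (c1*n1 + c2*t), sq_nonneg (c1*n2 + c3*t), sq_nonneg (c2*n2 - c3*n1)]
    have hcross : 60 * r * (s * ((-c1)*t + c2*n1 + c3*n2))
        ≤ 25 * s^2 + 36 * r^2 * ((-c1)*t + c2*n1 + c3*n2)^2 := by
      nlinarith [sq_nonneg (5*s - 6*r*((-c1)*t + c2*n1 + c3*n2))]
    have h30 : (0:ℝ) < 30 * r := by linarith
    have hA : 30*r*(s^2*t^2) ≤ 30*r*(4*s^2) := by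
      have := mul_le_mul_of_nonneg_left ht (sq_nonneg s)
      nlinarith
    have hB : 150*r*s^2 ≤ 150*r*(6*r^2*(c1^2+c2^2+c3^2+c4^2)) :=
      mul_le_mul_of_nonneg_left hs (by positivity)
    have hD : 25*s^2 ≤ 25*(6*r^2*(c1^2+c2^2+c3^2+c4^2)) := by linarith
    have hE : 36*r^2*((-c1)*t + c2*n1 + c3*n2)^2 ≤ 36*r^2*(5*(c1^2+c2^2+c3^2+c4^2)) :=
      mul_le_mul_of_nonneg_left hv2 (by positivity)
    have hr2Q : (0:ℝ) ≤ r^2*(c1^2+c2^2+c3^2+c4^2) := by positivity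
    have hr3Q : (0:ℝ) ≤ r^3*(c1^2+c2^2+c3^2+c4^2) := by positivity
    have hexp : 30*r*((c1 - s*t)^2 + (c2 + s*n1)^2 + (c3 + s*n2)^2 + c4^2)
        = 30*r*(c1^2+c2^2+c3^2+c4^2) + 30*r*(s^2*t^2) + 30*r*s^2
          + 60*r*(s*((-c1)*t + c2*n1 + c3*n2)) + 30*r*(s^2*(n1^2+n2^2) - s^2) := by ring
    have hn' : 30*r*(s^2*(n1^2+n2^2) - s^2) = 0 := by rw [hn]; ring
    have hfinal : 30*r*((c1 - s*t)^2 + (c2 + s*n1)^2 + (c3 + s*n2)^2 + c4^2)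
        ≤ 30*r*((1 + 6*r)^2 * (c1^2+c2^2+c3^2+c4^2)) := by
      rw [hexp, hn']
      linarith [hA, hB, hD, hE, hcross, hr2Q, hr3Q, mul_nonneg hpos.le hQ0]
    exact le_of_mul_le_mul_left hfinal h30


lemma stmt6_integ (a b : ℝ) : ∫ t in (0:ℝ)..1, (a + b * t) = a + b / 2 := by
  rw [intervalIntegral.integral_add intervalIntegrable_const
    ((intervalIntegral.intervalIntegrable_id).const_mul b),
    intervalIntegral.integral_const_mul, integral_id]
  simp
  ring

lemma stmt6_integ2 (β c2 c3 c4 n1 n2 D1 D2 E1 E2 : ℝ) :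
    (∫ t in (0:ℝ)..1, β * ((c2 + c4 * (D2 + t * (E2 - D2))) * n1
        + (c3 + c4 * (D1 + t * (E1 - D1))) * n2))
    = β * ((c2 + c4*((D2+E2)/2))*n1 + (c3 + c4*((D1+E1)/2))*n2) := by
  have heq : ∀ t : ℝ, β * ((c2 + c4 * (D2 + t * (E2 - D2))) * n1
      + (c3 + c4 * (D1 + t * (E1 - D1))) * n2)
      = (β*((c2 + c4*D2)*n1 + (c3 + c4*D1)*n2)) + (β*c4*((E2-D2)*n1 + (E1-D1)*n2)) * t :=
    fun t => by ring
  simp_rw [heq, stmt6_integ]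
  ring

lemma stmt6_main (βm βp c1m c2m c3m c1p c2p c3p c4 : ℝ) (D E n : ℝ × ℝ)
    (hβm : 0 < βm) (hβp : 0 < βp)
    (hD1 : D.1^2 ≤ 1) (hD2 : D.2^2 ≤ 1) (hE1 : E.1^2 ≤ 1) (hE2 : E.2^2 ≤ 1)
    (hne : 0 < (E.1 - D.1)^2 + (E.2 - D.2)^2)
    (hun : unitNormalTo n D E)
    (hj : bilJump βm βp c1m c2m c3m c1p c2p c3p c4 D E n) :
    Real.sqrt (c1m^2 + c2m^2 + c3m^2 + c4^2)
      ≤ (1 + 6*(|βp - βm|/βm)) * Real.sqrt (c1p^2 + c2p^2 + c3p^2 + c4^2) := by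
  obtain ⟨hn1, hnu⟩ := hun
  obtain ⟨hD, hE, hflux⟩ := hj
  rw [stmt6_integ2, stmt6_integ2] at hflux
  have hsq : Real.sqrt ((E.1 - D.1)^2 + (E.2 - D.2)^2) ≠ 0 :=
    ne_of_gt (Real.sqrt_pos.mpr hne)
  have hflux' := mul_left_cancel₀ hsq hflux
  obtain ⟨s, hsdef⟩ : ∃ s, s = (c2m - c2p)*n.1 + (c3m - c3p)*n.2 := ⟨_, rfl⟩
  obtain ⟨w, hwdef⟩ : ∃ w, w = (c2m - c2p)*n.2 - (c3m - c3p)*n.1 := ⟨_, rfl⟩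
  have hsub : (c2m - c2p)*(E.1-D.1) + (c3m - c3p)*(E.2-D.2) = 0 := by
    linear_combination hE - hD
  have hwu1 : w * (E.1-D.1) = 0 := by
    linear_combination (E.1-D.1)*hwdef + n.2*hsub - (c3m-c3p)*hnu
  have hwu2 : w * (E.2-D.2) = 0 := by
    linear_combination (E.2-D.2)*hwdef + (c2m-c2p)*hnu - n.1*hsub
  have hw2 : w^2 * ((E.1-D.1)^2 + (E.2-D.2)^2) = 0 := by
    linear_combination (w*(E.1-D.1))*hwu1 + (w*(E.2-D.2))*hwu2
  have hw : w = 0 := by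
    rcases mul_eq_zero.mp hw2 with h | h
    · exact sq_eq_zero_iff.mp h
    · exact absurd h (ne_of_gt hne)
  have hw' : (c2m-c2p)*n.2 - (c3m-c3p)*n.1 = 0 := by rw [← hwdef, hw]
  have hc2 : c2m = c2p + s * n.1 := by
    linear_combination (-n.1)*hsdef - (c2m-c2p)*hn1 + n.2*hw'
  have hc3 : c3m = c3p + s * n.2 := by
    linear_combination (-n.2)*hsdef - (c3m-c3p)*hn1 - n.1*hw'
  have hc1 : c1m = c1p - s*(n.1*D.1 + n.2*D.2) := by
    linear_combination hD - D.1*hc2 - D.2*hc3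
  have hβs : βm * s = (βp - βm) *
      ((c2p + c4*((D.2+E.2)/2))*n.1 + (c3p + c4*((D.1+E.1)/2))*n.2) := by
    linear_combination hflux' + βm*hsdef
  obtain ⟨P, hPdef⟩ : ∃ P, P = (c2p + c4*((D.2+E.2)/2))*n.1 + (c3p + c4*((D.1+E.1)/2))*n.2 :=
    ⟨_, rfl⟩
  rw [← hPdef] at hβs
  obtain ⟨M1, hM1⟩ : ∃ M1, M1 = (D.1+E.1)/2 := ⟨_, rfl⟩
  obtain ⟨M2, hM2⟩ : ∃ M2, M2 = (D.2+E.2)/2 := ⟨_, rfl⟩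
  rw [← hM1, ← hM2] at hPdef
  have hM1sq : M1^2 ≤ 1 := by rw [hM1]; nlinarith only [sq_nonneg (D.1 - E.1), hD1, hE1]
  have hM2sq : M2^2 ≤ 1 := by rw [hM2]; nlinarith only [sq_nonneg (D.2 - E.2), hD2, hE2]
  obtain ⟨Q, hQdef⟩ : ∃ Q, Q = M2*n.1 + M1*n.2 := ⟨_, rfl⟩
  have hPQ : P = c2p*n.1 + c3p*n.2 + c4*Q := by rw [hPdef, hQdef]; ring
  have hQ2 : Q^2 ≤ 2 := by
    rw [hQdef]
    nlinarith only [sq_nonneg (M2*n.2 - M1*n.1), hn1, hM1sq, hM2sq]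
  have hP2 : P^2 ≤ 6*(c1p^2+c2p^2+c3p^2+c4^2) := by
    have hcs : P^2 ≤ (c2p^2+c3p^2+c4^2) * (n.1^2+n.2^2+Q^2) := by
      rw [hPQ]
      nlinarith only [sq_nonneg (c2p*n.2 - c3p*n.1), sq_nonneg (c2p*Q - c4*n.1),
        sq_nonneg (c3p*Q - c4*n.2)]
    have h3 : n.1^2+n.2^2+Q^2 ≤ 3 := by rw [hn1]; linarith only [hQ2]
    have hcc : (0:ℝ) ≤ c2p^2+c3p^2+c4^2 := by positivity
    have := mul_le_mul_of_nonneg_left h3 hcc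
    nlinarith only [sq_nonneg c1p, this, hcs, hcc]
  have h1 : βm^2*s^2 = (βp-βm)^2*P^2 := by
    linear_combination (βm*s + (βp-βm)*P)*hβs
  have hs2 : s^2 ≤ 6*(|βp - βm|/βm)^2*(c1p^2+c2p^2+c3p^2+c4^2) := by
    have hb2 : (0:ℝ) < βm^2 := by positivity
    rw [div_pow, sq_abs, show 6*((βp-βm)^2/βm^2)*(c1p^2+c2p^2+c3p^2+c4^2)
      = (6*(βp-βm)^2*(c1p^2+c2p^2+c3p^2+c4^2))/βm^2 from by ring, le_div_iff₀ hb2]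
    nlinarith only [mul_le_mul_of_nonneg_left hP2 (sq_nonneg (βp-βm)), h1]
  have ht : (n.1*D.1 + n.2*D.2)^2 ≤ 4 := by
    nlinarith only [sq_nonneg (n.1*D.2 - n.2*D.1), hn1, hD1, hD2]
  have hr : (0:ℝ) ≤ |βp - βm|/βm := by positivity
  have hkey := stmt6_key (|βp - βm|/βm) c1p c2p c3p c4 s (n.1*D.1 + n.2*D.2) n.1 n.2 hr hn1 ht hs2
  have hQm : c1m^2 + c2m^2 + c3m^2 + c4^2
      ≤ (1 + 6*(|βp - βm|/βm))^2 * (c1p^2 + c2p^2 + c3p^2 + c4^2) := by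
    rw [hc1, hc2, hc3]; exact hkey
  calc Real.sqrt (c1m^2 + c2m^2 + c3m^2 + c4^2)
      ≤ Real.sqrt ((1 + 6*(|βp - βm|/βm))^2 * (c1p^2 + c2p^2 + c3p^2 + c4^2)) :=
        Real.sqrt_le_sqrt hQm
    _ = (1 + 6*(|βp - βm|/βm)) * Real.sqrt (c1p^2 + c2p^2 + c3p^2 + c4^2) := by
        rw [Real.sqrt_mul (by positivity), Real.sqrt_sq (by positivity)]

/-- coefficient comparison for bilinear IFE functions on `K = [0,h]²` with an
interface configuration of Type I (`D = (0,dh)`, `E = (eh,0)`, `(d,e) ≠ (0,0)`) or Type II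
(`D = (dh,h)`, `E = (eh,0)`): there is `C > 1` depending only on `β⁻, β⁺` with
`(1/C)‖(c₁⁺,c₂⁺,c₃⁺,c₄)‖ ≤ ‖(c₁⁻,c₂⁻,c₃⁻,c₄)‖ ≤ C‖(c₁⁺,c₂⁺,c₃⁺,c₄)‖`. -/
theorem stmt6 (βm βp : ℝ) (hβm : 0 < βm) (hβp : 0 < βp) :
    ∃ C : ℝ, 1 < C ∧
      ∀ h d e c1m c2m c3m c1p c2p c3p c4 : ℝ, ∀ D E n : ℝ × ℝ,
        0 < h → h < 1 →
        d ∈ Set.Icc (0:ℝ) 1 → e ∈ Set.Icc (0:ℝ) 1 →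
        unitNormalTo n D E →
        ((D = ((0:ℝ), d * h) ∧ E = (e * h, (0:ℝ)) ∧ (d, e) ≠ (0, 0)) ∨
         (D = (d * h, h) ∧ E = (e * h, (0:ℝ)))) →
        bilJump βm βp c1m c2m c3m c1p c2p c3p c4 D E n →
        (1 / C) * Real.sqrt (c1p ^ 2 + c2p ^ 2 + c3p ^ 2 + c4 ^ 2)
            ≤ Real.sqrt (c1m ^ 2 + c2m ^ 2 + c3m ^ 2 + c4 ^ 2) ∧
        Real.sqrt (c1m ^ 2 + c2m ^ 2 + c3m ^ 2 + c4 ^ 2)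
            ≤ C * Real.sqrt (c1p ^ 2 + c2p ^ 2 + c3p ^ 2 + c4 ^ 2) := by
  have hrm : (0:ℝ) ≤ |βp - βm|/βm := by positivity
  have hrp : (0:ℝ) ≤ |βm - βp|/βp := by positivity
  refine ⟨2 + 6*(|βp - βm|/βm) + 6*(|βm - βp|/βp), by linarith, ?_⟩
  intro h d e c1m c2m c3m c1p c2p c3p c4 D E n hh0 hh1 hd he hun hcfg hj
  set C := 2 + 6*(|βp - βm|/βm) + 6*(|βm - βp|/βp) with hC
  have hC0 : (0:ℝ) < C := by rw [hC]; linarith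
  have hdh0 : 0 ≤ d*h := mul_nonneg hd.1 hh0.le
  have hdh1 : d*h ≤ 1 := mul_le_one₀ hd.2 hh0.le hh1.le
  have heh0 : 0 ≤ e*h := mul_nonneg he.1 hh0.le
  have heh1 : e*h ≤ 1 := mul_le_one₀ he.2 hh0.le hh1.le
  have hbounds : D.1^2 ≤ 1 ∧ D.2^2 ≤ 1 ∧ E.1^2 ≤ 1 ∧ E.2^2 ≤ 1 ∧
      0 < (E.1 - D.1)^2 + (E.2 - D.2)^2 := by
    rcases hcfg with ⟨hDv, hEv, hde⟩ | ⟨hDv, hEv⟩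
    · subst hDv; subst hEv
      have hde' : d ≠ 0 ∨ e ≠ 0 := by
        rcases eq_or_ne d 0 with h1 | h1
        · rcases eq_or_ne e 0 with h2 | h2
          · exact absurd (by rw [h1, h2]) hde
          · exact Or.inr h2
        · exact Or.inl h1
      refine ⟨by show (0:ℝ)^2 ≤ 1; norm_num, by show (d*h)^2 ≤ 1; nlinarith only [hdh0, hdh1],
        by show (e*h)^2 ≤ 1; nlinarith only [heh0, heh1], by show (0:ℝ)^2 ≤ 1; norm_num, ?_⟩
      show 0 < (e*h - 0)^2 + (0 - d*h)^2
      rcases hde' with h1 | h1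
      · have : 0 < d*h := mul_pos (lt_of_le_of_ne hd.1 (Ne.symm h1)) hh0
        nlinarith only [this, sq_nonneg (e*h - 0)]
      · have : 0 < e*h := mul_pos (lt_of_le_of_ne he.1 (Ne.symm h1)) hh0
        nlinarith only [this, sq_nonneg ((0:ℝ) - d*h)]
    · subst hDv; subst hEv
      refine ⟨by show (d*h)^2 ≤ 1; nlinarith only [hdh0, hdh1], by show h^2 ≤ 1; nlinarith only [hh0, hh1],
        by show (e*h)^2 ≤ 1; nlinarith only [heh0, heh1], by show (0:ℝ)^2 ≤ 1; norm_num, ?_⟩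
      show 0 < (e*h - d*h)^2 + (0 - h)^2
      nlinarith only [hh0, hh1, sq_nonneg (e*h - d*h)]
  obtain ⟨hb1, hb2, hb3, hb4, hb5⟩ := hbounds
  have hmp := stmt6_main βm βp c1m c2m c3m c1p c2p c3p c4 D E n hβm hβp hb1 hb2 hb3 hb4 hb5 hun hj
  have hj' : bilJump βp βm c1p c2p c3p c1m c2m c3m c4 D E n :=
    ⟨hj.1.symm, hj.2.1.symm, hj.2.2.symm⟩
  have hpm := stmt6_main βp βm c1p c2p c3p c1m c2m c3m c4 D E n hβp hβm hb1 hb2 hb3 hb4 hb5 hun hj'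
  have hsp : (0:ℝ) ≤ Real.sqrt (c1p ^ 2 + c2p ^ 2 + c3p ^ 2 + c4 ^ 2) := Real.sqrt_nonneg _
  have hsm : (0:ℝ) ≤ Real.sqrt (c1m ^ 2 + c2m ^ 2 + c3m ^ 2 + c4 ^ 2) := Real.sqrt_nonneg _
  constructor
  · rw [one_div, inv_mul_le_iff₀ hC0]
    calc Real.sqrt (c1p ^ 2 + c2p ^ 2 + c3p ^ 2 + c4 ^ 2)
        ≤ (1 + 6*(|βm - βp|/βp)) * Real.sqrt (c1m ^ 2 + c2m ^ 2 + c3m ^ 2 + c4 ^ 2) := hpm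
      _ ≤ C * Real.sqrt (c1m ^ 2 + c2m ^ 2 + c3m ^ 2 + c4 ^ 2) := by
          apply mul_le_mul_of_nonneg_right _ hsm
          rw [hC]; linarith
  · calc Real.sqrt (c1m ^ 2 + c2m ^ 2 + c3m ^ 2 + c4 ^ 2)
        ≤ (1 + 6*(|βp - βm|/βm)) * Real.sqrt (c1p ^ 2 + c2p ^ 2 + c3p ^ 2 + c4 ^ 2) := hmp
      _ ≤ C * Real.sqrt (c1p ^ 2 + c2p ^ 2 + c3p ^ 2 + c4 ^ 2) := by
          apply mul_le_mul_of_nonneg_right _ hsp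
          rw [hC]; linarith
end

section
/- Let h > 0 and K = [0,h] × [0,h]. If H ⊂ ℝ² is a closed half-plane whose intersection with K has Lebesgue area at least h²/2, then H contains at least one of the four closed congruent quarter squares K₁ = [0,h/2] × [0,h/2], K₂ = [h/2,h] × [0,h/2], K₃ = [0,h/2] × [h/2,h], K₄ = [h/2,h] × [h/2,h]. -/
set_option maxHeartbeats 1000000

open MeasureTheory

/-- if a closed half-plane `H = {X : X·u ≤ c}` meets the square
`K = [0,h]²` in a set of area at least `h²/2`, then `H` contains one of the four closed
quarter squares of `K`. -/
theorem stmt7 (h : ℝ) (h0 : 0 < h) (u : ℝ × ℝ) (c : ℝ)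
    (hu : u.1 ^ 2 + u.2 ^ 2 = 1)
    (H : Set (ℝ × ℝ)) (hH : H = {X : ℝ × ℝ | X.1 * u.1 + X.2 * u.2 ≤ c})
    (harea : ENNReal.ofReal (h ^ 2 / 2)
      ≤ volume (H ∩ (Set.Icc (0:ℝ) h ×ˢ Set.Icc (0:ℝ) h))) :
    (Set.Icc (0:ℝ) (h / 2) ×ˢ Set.Icc (0:ℝ) (h / 2)) ⊆ H ∨
    (Set.Icc (h / 2) h ×ˢ Set.Icc (0:ℝ) (h / 2)) ⊆ H ∨
    (Set.Icc (0:ℝ) (h / 2) ×ˢ Set.Icc (h / 2) h) ⊆ H ∨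
    (Set.Icc (h / 2) h ×ˢ Set.Icc (h / 2) h) ⊆ H := by
  set a := u.1 with ha
  set b := u.2 with hb
  suffices hc0 : (h/2) * a + (h/2) * b ≤ c by
    rcases le_or_gt 0 a with hA | hA <;> rcases le_or_gt 0 b with hB | hB
    · left
      rintro ⟨x, y⟩ hxy
      rw [Set.mem_prod, Set.mem_Icc, Set.mem_Icc] at hxy
      rw [hH]; simp only [Set.mem_setOf_eq, ← ha, ← hb]
      nlinarith [mul_le_mul_of_nonneg_right hxy.1.2 hA, mul_le_mul_of_nonneg_right hxy.2.2 hB]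
    · right; right; left
      rintro ⟨x, y⟩ hxy
      rw [Set.mem_prod, Set.mem_Icc, Set.mem_Icc] at hxy
      rw [hH]; simp only [Set.mem_setOf_eq, ← ha, ← hb]
      nlinarith [mul_le_mul_of_nonneg_right hxy.1.2 hA, mul_le_mul_of_nonpos_right hxy.2.1 hB.le]
    · right; left
      rintro ⟨x, y⟩ hxy
      rw [Set.mem_prod, Set.mem_Icc, Set.mem_Icc] at hxy
      rw [hH]; simp only [Set.mem_setOf_eq, ← ha, ← hb]
      nlinarith [mul_le_mul_of_nonpos_right hxy.1.1 hA.le, mul_le_mul_of_nonneg_right hxy.2.2 hB]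
    · right; right; right
      rintro ⟨x, y⟩ hxy
      rw [Set.mem_prod, Set.mem_Icc, Set.mem_Icc] at hxy
      rw [hH]; simp only [Set.mem_setOf_eq, ← ha, ← hb]
      nlinarith [mul_le_mul_of_nonpos_right hxy.1.1 hA.le, mul_le_mul_of_nonpos_right hxy.2.1 hB.le]
  -- Step 2 : the center lies in H
  by_contra hcon
  push_neg at hcon
  set K : Set (ℝ × ℝ) := Set.Icc (0:ℝ) h ×ˢ Set.Icc (0:ℝ) h with hK
  set c' : ℝ := h * (a + b) - c with hc'
  have hcc' : c < c' := by rw [hc']; linarith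
  set H' : Set (ℝ × ℝ) := {X : ℝ × ℝ | c' ≤ X.1 * a + X.2 * b} with hH'
  set S : Set (ℝ × ℝ) :=
    {X : ℝ × ℝ | c < X.1 * a + X.2 * b ∧ X.1 * a + X.2 * b < c'} ∩
      (Set.Ioo (0:ℝ) h ×ˢ Set.Ioo (0:ℝ) h) with hS
  -- measurability
  have hmeas_lin : Measurable fun X : ℝ × ℝ => X.1 * a + X.2 * b := by measurability
  have hmH : MeasurableSet (H ∩ K) := by
    rw [hH]
    exact (hmeas_lin measurableSet_Iic).inter (measurableSet_Icc.prod measurableSet_Icc)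
  have hmH' : MeasurableSet (H' ∩ K) := by
    rw [hH']
    exact (hmeas_lin measurableSet_Ici).inter (measurableSet_Icc.prod measurableSet_Icc)
  -- S is open and nonempty
  have hSopen : IsOpen S := by
    rw [hS]
    have : Continuous fun X : ℝ × ℝ => X.1 * a + X.2 * b := by continuity
    exact ((isOpen_Ioo.preimage this)).inter (isOpen_Ioo.prod isOpen_Ioo)
  have hSne : S.Nonempty := by
    refine ⟨(h/2, h/2), ⟨?_, ?_⟩, ?_⟩
    · simpa using hcon
    · simp only [hc']; linarith
    · constructor <;> constructor <;> simp <;> linarith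
  have hSpos : 0 < volume S := hSopen.measure_pos volume hSne
  -- reflection
  have hrefl : volume (H' ∩ K) = volume (H ∩ K) := by
    have hmp : MeasurePreserving (Prod.map (fun t : ℝ => h - t) (fun t : ℝ => h - t))
        (volume : Measure (ℝ × ℝ)) (volume : Measure (ℝ × ℝ)) := by
      rw [MeasureTheory.Measure.volume_eq_prod ℝ ℝ]
      exact (Measure.measurePreserving_sub_left volume h).prod (Measure.measurePreserving_sub_left volume h)
    have himg : Prod.map (fun t : ℝ => h - t) (fun t : ℝ => h - t) ⁻¹' (H ∩ K) = H' ∩ K := by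
      ext ⟨x, y⟩
      simp only [Set.mem_preimage, Prod.map_apply, Set.mem_inter_iff, hH, hH', hK,
        Set.mem_setOf_eq, Set.mem_prod, Set.mem_Icc, ← ha, ← hb, hc']
      constructor
      · rintro ⟨h1, ⟨h2, h3⟩, h4, h5⟩
        refine ⟨by linarith, ⟨by linarith, by linarith⟩, by linarith, by linarith⟩
      · rintro ⟨h1, ⟨h2, h3⟩, h4, h5⟩
        refine ⟨by linarith, ⟨by linarith, by linarith⟩, by linarith, by linarith⟩
    rw [← himg, hmp.measure_preimage hmH.nullMeasurableSet]
  -- disjointness and inclusion in K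
  have hsub : (H ∩ K) ∪ (H' ∩ K) ∪ S ⊆ K := by
    rintro X (hX | hX)
    · exact hX.elim (fun h1 => h1.2) (fun h1 => h1.2)
    · exact ⟨Set.Ioo_subset_Icc_self hX.2.1, Set.Ioo_subset_Icc_self hX.2.2⟩
  have hd1 : Disjoint (H ∩ K) (H' ∩ K) := by
    rw [Set.disjoint_left]
    rintro X ⟨hX1, _⟩ ⟨hX2, _⟩
    rw [hH] at hX1; rw [hH'] at hX2
    simp only [Set.mem_setOf_eq, ← ha, ← hb] at hX1 hX2
    linarith
  have hd2 : Disjoint ((H ∩ K) ∪ (H' ∩ K)) S := by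
    rw [Set.disjoint_left]
    rintro X (⟨hX1, _⟩ | ⟨hX1, _⟩) ⟨hX2, _⟩ <;>
      [rw [hH] at hX1; rw [hH'] at hX1] <;>
      simp only [Set.mem_setOf_eq, ← ha, ← hb] at hX1 hX2 <;>
      [exact absurd hX2.1 (not_lt.2 hX1); exact absurd hX2.2 (not_lt.2 hX1)]
  -- volume computation
  have hKvol : volume K = ENNReal.ofReal (h ^ 2) := by
    rw [hK, MeasureTheory.Measure.volume_eq_prod ℝ ℝ, Measure.prod_prod, Real.volume_Icc,
      ← ENNReal.ofReal_mul (by linarith)]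
    ring_nf
  have htot : volume (H ∩ K) + volume (H' ∩ K) + volume S ≤ ENNReal.ofReal (h ^ 2) := by
    rw [← hKvol, ← measure_union hd1 hmH', ← measure_union hd2 hSopen.measurableSet]
    exact measure_mono hsub
  rw [hrefl] at htot
  have h2 : ENNReal.ofReal (h ^ 2 / 2) + ENNReal.ofReal (h ^ 2 / 2) + volume S
      ≤ ENNReal.ofReal (h ^ 2) :=
    le_trans (by gcongr) htot
  rw [← ENNReal.ofReal_add (by positivity) (by positivity)] at h2
  have : (h:ℝ) ^ 2 / 2 + h ^ 2 / 2 = h ^ 2 := by ring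
  rw [this] at h2
  have hfin : ENNReal.ofReal (h ^ 2) ≠ ⊤ := ENNReal.ofReal_ne_top
  have : volume S = 0 := by
    have h3 : ENNReal.ofReal (h ^ 2) + volume S ≤ ENNReal.ofReal (h ^ 2) + 0 := by
      simpa using h2
    exact le_antisymm (by simpa using ENNReal.le_of_add_le_add_left hfin h3) zero_le
  exact absurd this hSpos.ne'
end

section
/- There exist absolute constants C₁ > 0 and C₂ > 0 such that the following holds: for every h > 0, every β^s > 0, every closed half-plane H ⊂ ℝ² with area(H ∩ K) ≥ h²/2 where K = [0,h]², and every bilinear polynomial w(x,y) = c₁^s + c₂^s x + c₃^s y + c₄ xy, there exists a closed square K̃ ⊆ H ∩ K with area |K̃| ≥ C₁ |K| and (h/|K̃|) · β^s ∫_{K̃} |∇w|² dX ≥ C₂ β^s (h (c₂^s)² + h (c₃^s)² + h³ c₄²). -/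
open MeasureTheory


lemma slice_bound (h u1 u2 c : ℝ) (hh : 0 < h) (hu2 : u2 ≠ 0)
    (hvol : ENNReal.ofReal (h^2/2) ≤
      volume ({X : ℝ×ℝ | X.1*u1 + X.2*u2 ≤ c} ∩ (Set.Icc (0:ℝ) h ×ˢ Set.Icc (0:ℝ) h))) :
    h * |u2| / 2 ≤ c - (h * min u1 0 + h * min u2 0) := by
  set S := ({X : ℝ×ℝ | X.1*u1 + X.2*u2 ≤ c} ∩ (Set.Icc (0:ℝ) h ×ˢ Set.Icc (0:ℝ) h)) with hS
  set t : ℝ := c - (h * min u1 0 + h * min u2 0) with ht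
  have hmeas : MeasurableSet S := by
    apply MeasurableSet.inter
    · exact measurableSet_le (by fun_prop) measurable_const
    · exact (measurableSet_Icc.prod measurableSet_Icc)
  have hx1 : ∀ x ∈ Set.Icc (0:ℝ) h, h * min u1 0 ≤ x * u1 := by
    intro x hx
    rcases le_or_gt u1 0 with h1 | h1
    · rw [min_eq_left h1]
      nlinarith [hx.1, hx.2]
    · rw [min_eq_right h1.le]
      nlinarith [hx.1, hx.2]
  have hslice : ∀ x : ℝ, volume (Prod.mk x ⁻¹' S) ≤
      (Set.Icc (0:ℝ) h).indicator (fun _ => ENNReal.ofReal (t/|u2|)) x := by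
    intro x
    by_cases hx : x ∈ Set.Icc (0:ℝ) h
    · rw [Set.indicator_of_mem hx]
      rcases hu2.lt_or_gt with h2 | h2
      · -- u2 < 0 : slice ⊆ Icc (h + t/u2) h
        have hsub : Prod.mk x ⁻¹' S ⊆ Set.Icc (h + t/u2) h := by
          intro y hy
          obtain ⟨hle, hxK, hyK⟩ := hy
          simp only [Set.mem_setOf_eq] at hle
          constructor
          · have hmin2 : min u2 0 = u2 := min_eq_left h2.le
            have : y * u2 ≤ t + h * u2 := by
              have := hx1 x hx
              rw [ht, hmin2] at *
              nlinarith
            have heq : (t + h*u2)/u2 = h + t/u2 := by field_simp; ring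
            rw [← heq, div_le_iff_of_neg h2]
            linarith
          · exact hyK.2
        calc volume (Prod.mk x ⁻¹' S) ≤ volume (Set.Icc (h + t/u2) h) := measure_mono hsub
          _ = ENNReal.ofReal (t/|u2|) := by
              rw [Real.volume_Icc]
              rw [abs_of_neg h2]
              congr 1
              rw [div_neg]
              ring
      · -- 0 < u2 : slice ⊆ Icc 0 (t/u2)
        have hsub : Prod.mk x ⁻¹' S ⊆ Set.Icc (0:ℝ) (t/u2) := by
          intro y hy
          obtain ⟨hle, hxK, hyK⟩ := hy
          simp only [Set.mem_setOf_eq] at hle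
          refine ⟨hyK.1, ?_⟩
          have hmin2 : min u2 0 = 0 := min_eq_right h2.le
          have hyu : y * u2 ≤ t := by
            have := hx1 x hx
            rw [ht, hmin2] at *
            nlinarith
          rw [le_div_iff₀ h2]
          linarith [hyu]
        calc volume (Prod.mk x ⁻¹' S) ≤ volume (Set.Icc (0:ℝ) (t/u2)) := measure_mono hsub
          _ = ENNReal.ofReal (t/|u2|) := by
              rw [Real.volume_Icc, abs_of_pos h2]
              congr 1
              ring
    · have : Prod.mk x ⁻¹' S = ∅ := by
        ext y
        simp only [Set.mem_preimage, Set.mem_empty_iff_false, iff_false]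
        intro hy
        exact hx hy.2.1
      rw [this, Set.indicator_of_notMem hx]
      simp
  have hvolS : volume S ≤ ENNReal.ofReal h * ENNReal.ofReal (t/|u2|) := by
    rw [MeasureTheory.Measure.volume_eq_prod, Measure.prod_apply hmeas]
    calc ∫⁻ x, volume (Prod.mk x ⁻¹' S) ≤
        ∫⁻ x, (Set.Icc (0:ℝ) h).indicator (fun _ => ENNReal.ofReal (t/|u2|)) x :=
          lintegral_mono hslice
      _ = volume (Set.Icc (0:ℝ) h) * ENNReal.ofReal (t/|u2|) := by
          rw [lintegral_indicator measurableSet_Icc, setLIntegral_const, mul_comm]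
      _ = ENNReal.ofReal h * ENNReal.ofReal (t/|u2|) := by
          rw [Real.volume_Icc, sub_zero]
  have hle : ENNReal.ofReal (h^2/2) ≤ ENNReal.ofReal (h * (t/|u2|)) := by
    rw [ENNReal.ofReal_mul hh.le] at *
    exact hvol.trans hvolS
  rcases ENNReal.ofReal_le_ofReal_iff'.mp hle with h1 | h1
  · have hu2' : 0 < |u2| := abs_pos.mpr hu2
    have ht' : t/|u2| * |u2| = t := div_mul_cancel₀ t hu2'.ne'
    nlinarith [h1, hu2', hh]
  · nlinarith


lemma slice_bound' (h u1 u2 c : ℝ) (hh : 0 < h) (hu1 : u1 ≠ 0)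
    (hvol : ENNReal.ofReal (h^2/2) ≤
      volume ({X : ℝ×ℝ | X.1*u1 + X.2*u2 ≤ c} ∩ (Set.Icc (0:ℝ) h ×ˢ Set.Icc (0:ℝ) h))) :
    h * |u1| / 2 ≤ c - (h * min u1 0 + h * min u2 0) := by
  have key : volume ({X : ℝ×ℝ | X.1*u2 + X.2*u1 ≤ c} ∩ (Set.Icc (0:ℝ) h ×ˢ Set.Icc (0:ℝ) h))
      = volume ({X : ℝ×ℝ | X.1*u1 + X.2*u2 ≤ c} ∩ (Set.Icc (0:ℝ) h ×ˢ Set.Icc (0:ℝ) h)) := by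
    have hmeas : MeasurableSet ({X : ℝ×ℝ | X.1*u1 + X.2*u2 ≤ c} ∩ (Set.Icc (0:ℝ) h ×ˢ Set.Icc (0:ℝ) h)) := by
      apply MeasurableSet.inter
      · exact measurableSet_le (by fun_prop) measurable_const
      · exact (measurableSet_Icc.prod measurableSet_Icc)
    have hpre : Prod.swap ⁻¹' ({X : ℝ×ℝ | X.1*u1 + X.2*u2 ≤ c} ∩ (Set.Icc (0:ℝ) h ×ˢ Set.Icc (0:ℝ) h))
        = {X : ℝ×ℝ | X.1*u2 + X.2*u1 ≤ c} ∩ (Set.Icc (0:ℝ) h ×ˢ Set.Icc (0:ℝ) h) := by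
      ext ⟨x, y⟩
      simp only [Set.mem_preimage, Prod.swap_prod_mk, Set.mem_inter_iff, Set.mem_setOf_eq,
        Set.mem_prod, Set.mem_Icc]
      constructor
      · rintro ⟨h1, h2, h3⟩; exact ⟨by linarith, h3, h2⟩
      · rintro ⟨h1, h2, h3⟩; exact ⟨by linarith, h3, h2⟩
    rw [← hpre]
    have hmp : MeasurePreserving (Prod.swap : ℝ×ℝ → ℝ×ℝ) volume volume := by
      rw [MeasureTheory.Measure.volume_eq_prod]
      exact Measure.measurePreserving_swap
    exact hmp.measure_preimage hmeas.nullMeasurableSet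
  have := slice_bound h u2 u1 c hh hu1 (by rw [key]; exact hvol)
  linarith

lemma antideriv (p q s t : ℝ) (hst : s ≤ t) :
    ∫ y in Set.Icc s t, (p + q*y)^2 =
      (p^2*t + p*q*t^2 + q^2*t^3/3) - (p^2*s + p*q*s^2 + q^2*s^3/3) := by
  rw [MeasureTheory.integral_Icc_eq_integral_Ioc, ← intervalIntegral.integral_of_le hst]
  apply intervalIntegral.integral_eq_sub_of_hasDerivAt
  · intro x _
    have h0 := (hasDerivAt_id x).const_mul (p^2)
    have h1 := (hasDerivAt_pow 2 x).const_mul (p*q)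
    have h2 := ((hasDerivAt_pow 3 x).const_mul (q^2)).div_const 3
    convert (h0.add h1).add h2 using 1
    · funext y; simp only [Pi.add_apply, id]
    push_cast
    ring
  · apply Continuous.intervalIntegrable
    fun_prop

lemma prod_int (a b l p r q : ℝ) (hl : 0 ≤ l) :
    ∫ X in (Set.Icc a (a+l) ×ˢ Set.Icc b (b+l)),
        ((p + q*X.2)^2 + (r + q*X.1)^2) =
      l * (∫ y in Set.Icc b (b+l), (p + q*y)^2)
        + l * (∫ x in Set.Icc a (a+l), (r + q*x)^2) := by
  have hcomp : IsCompact (Set.Icc a (a+l) ×ˢ Set.Icc b (b+l)) :=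
    isCompact_Icc.prod isCompact_Icc
  have hcont : Continuous (fun X : ℝ×ℝ => (p + q*X.2)^2 + (r + q*X.1)^2) := by fun_prop
  have hint : IntegrableOn (fun X : ℝ×ℝ => (p + q*X.2)^2 + (r + q*X.1)^2)
      (Set.Icc a (a+l) ×ˢ Set.Icc b (b+l)) volume :=
    hcont.continuousOn.integrableOn_compact hcomp
  rw [MeasureTheory.Measure.volume_eq_prod] at hint ⊢
  rw [MeasureTheory.setIntegral_prod _ hint]
  have hin : ∀ x : ℝ, ∫ y in Set.Icc b (b+l), ((p + q*y)^2 + (r + q*x)^2) =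
      (∫ y in Set.Icc b (b+l), (p + q*y)^2) + l * (r + q*x)^2 := by
    intro x
    rw [MeasureTheory.integral_add]
    · congr 1
      rw [MeasureTheory.setIntegral_const, measureReal_def, Real.volume_Icc]
      rw [smul_eq_mul]
      congr 1
      rw [ENNReal.toReal_ofReal (by linarith)]
      ring
    · exact (Continuous.integrableOn_Icc (by fun_prop))
    · exact (Continuous.integrableOn_Icc (by fun_prop))
  simp_rw [hin]
  rw [MeasureTheory.integral_add]
  · rw [MeasureTheory.setIntegral_const, measureReal_def, Real.volume_Icc, smul_eq_mul,
      ENNReal.toReal_ofReal (by linarith : (0:ℝ) ≤ a + l - a)]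
    rw [MeasureTheory.integral_const_mul]
    ring_nf
  · exact integrableOn_const (by rw [Real.volume_Icc]; exact ENNReal.ofReal_ne_top)
  · exact (Continuous.integrableOn_Icc (by fun_prop : Continuous fun x : ℝ => (r + q*x)^2)).const_mul l

lemma G_lower (p q b l : ℝ) (hl : 0 < l) (hb : 0 ≤ b) (hbl : b + l ≤ 4*l) :
    (1/576) * (l*p^2 + 16*l^3*q^2) ≤
      (p^2*(b+l) + p*q*(b+l)^2 + q^2*(b+l)^3/3) - (p^2*b + p*q*b^2 + q^2*b^3/3) := by
  have key : (p^2*(b+l) + p*q*(b+l)^2 + q^2*(b+l)^3/3) - (p^2*b + p*q*b^2 + q^2*b^3/3)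
      = l*(p + q*(b+l/2))^2 + q^2*l^3/12 := by ring
  rw [key]
  have hm : b + l/2 ≤ (7/2)*l := by linarith
  have hm0 : 0 ≤ b + l/2 := by linarith
  have h2 : (b+l/2)^2 ≤ ((7/2)*l)^2 := by nlinarith
  have h3 : p^2 ≤ 2*(p+q*(b+l/2))^2 + 2*(q^2*(b+l/2)^2) := by
    nlinarith [sq_nonneg ((p+q*(b+l/2)) + q*(b+l/2))]
  have h4 : l*p^2 ≤ 2*(l*(p+q*(b+l/2))^2) + 2*(l*(q^2*(b+l/2)^2)) := by
    nlinarith [mul_le_mul_of_nonneg_left h3 hl.le]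
  have h5 : l*(q^2*(b+l/2)^2) ≤ (49/4)*(l^3*q^2) := by
    nlinarith [mul_le_mul_of_nonneg_left h2 (mul_nonneg hl.le (sq_nonneg q)), mul_pos (mul_pos hl hl) hl]
  have h6 : 0 ≤ l*(p+q*(b+l/2))^2 := mul_nonneg hl.le (sq_nonneg _)
  have h7 : 0 ≤ l^3*q^2 := mul_nonneg (by positivity) (sq_nonneg q)
  linarith


set_option maxHeartbeats 1000000 in
/-- there are absolute constants `C₁, C₂ > 0` such that for every `h > 0`,
every `βˢ > 0`, every closed half-plane `H` with `area(H ∩ K) ≥ h²/2` (`K = [0,h]²`), and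
every bilinear polynomial `w = c₁ˢ + c₂ˢx + c₃ˢy + c₄xy` (with `∇w = (c₂ˢ + c₄y, c₃ˢ + c₄x)`),
there is a closed square `K̃ ⊆ H ∩ K` with `|K̃| ≥ C₁|K|` and
`(h/|K̃|) βˢ ∫_{K̃} |∇w|² ≥ C₂ βˢ (h(c₂ˢ)² + h(c₃ˢ)² + h³c₄²)`. -/
theorem stmt9 :
    ∃ C1 C2 : ℝ, 0 < C1 ∧ 0 < C2 ∧
      ∀ h : ℝ, 0 < h → ∀ βs : ℝ, 0 < βs →
        ∀ u : ℝ × ℝ, ∀ c : ℝ, u.1 ^ 2 + u.2 ^ 2 = 1 →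
          ∀ H : Set (ℝ × ℝ), H = {X : ℝ × ℝ | X.1 * u.1 + X.2 * u.2 ≤ c} →
            ENNReal.ofReal (h ^ 2 / 2)
                ≤ volume (H ∩ (Set.Icc (0:ℝ) h ×ˢ Set.Icc (0:ℝ) h)) →
            ∀ c1s c2s c3s c4 : ℝ,
              ∃ a b l : ℝ, 0 < l ∧
                (Set.Icc a (a + l) ×ˢ Set.Icc b (b + l))
                    ⊆ H ∩ (Set.Icc (0:ℝ) h ×ˢ Set.Icc (0:ℝ) h) ∧
                C1 * h ^ 2 ≤ l ^ 2 ∧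
                C2 * βs * (h * c2s ^ 2 + h * c3s ^ 2 + h ^ 3 * c4 ^ 2)
                  ≤ (h / l ^ 2) * (βs *
                      ∫ X in (Set.Icc a (a + l) ×ˢ Set.Icc b (b + l)),
                        ((c2s + c4 * X.2) ^ 2 + (c3s + c4 * X.1) ^ 2)) := by
  refine ⟨1/16, 1/576, by norm_num, by norm_num, ?_⟩
  intro h hh βs hβs u c hu H hH hvol c1s c2s c3s c4
  obtain ⟨u1, u2⟩ := u
  simp only at hu hH ⊢
  subst hH
  set l : ℝ := h/4 with hl_def
  have hl : 0 < l := by positivity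
  have hl4 : h = 4*l := by rw [hl_def]; ring
  set a : ℝ := if 0 ≤ u1 then 0 else 3*h/4 with ha_def
  set b : ℝ := if 0 ≤ u2 then 0 else 3*h/4 with hb_def
  have ha0 : 0 ≤ a := by rw [ha_def]; split <;> positivity
  have hb0 : 0 ≤ b := by rw [hb_def]; split <;> positivity
  have ha3 : a ≤ 3*l := by rw [ha_def]; split <;> [positivity; linarith]
  have hb3 : b ≤ 3*l := by rw [hb_def]; split <;> [positivity; linarith]
  -- the key lower bound on c - m0
  set m0 : ℝ := h * min u1 0 + h * min u2 0 with hm0_def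
  have hkey : l * (|u1| + |u2|) ≤ c - m0 := by
    have habs : |u1|^2 + |u2|^2 = 1 := by
      rw [sq_abs, sq_abs]; exact hu
    rcases le_total |u1| |u2| with hcmp | hcmp
    · have hu2 : u2 ≠ 0 := by
        intro h0
        rw [h0] at habs hcmp
        simp at habs hcmp
        nlinarith [abs_nonneg u1, habs]
      have := slice_bound h u1 u2 c hh hu2 hvol
      have h1 : |u1| + |u2| ≤ 2 * |u2| := by linarith
      nlinarith [abs_nonneg u2]
    · have hu1 : u1 ≠ 0 := by
        intro h0
        rw [h0] at habs hcmp
        simp at habs hcmp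
        nlinarith [abs_nonneg u2, habs]
      have := slice_bound' h u1 u2 c hh hu1 hvol
      have h1 : |u1| + |u2| ≤ 2 * |u1| := by linarith
      nlinarith [abs_nonneg u1]
  refine ⟨a, b, l, hl, ?_, ?_, ?_⟩
  · -- subset
    rintro ⟨x, y⟩ hxy
    obtain ⟨hx, hy⟩ := hxy
    simp only [Set.mem_Icc] at hx hy
    have hxu : x * u1 ≤ h * min u1 0 + l * |u1| := by
      rcases le_or_gt 0 u1 with h1 | h1
      · rw [min_eq_right h1, abs_of_nonneg h1, ha_def] at *
        simp only [if_pos h1] at hx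
        nlinarith [hx.1, hx.2]
      · rw [min_eq_left h1.le, abs_of_neg h1, ha_def] at *
        simp only [if_neg (not_le.mpr h1)] at hx
        nlinarith [hx.1, hx.2]
    have hyu : y * u2 ≤ h * min u2 0 + l * |u2| := by
      rcases le_or_gt 0 u2 with h1 | h1
      · rw [min_eq_right h1, abs_of_nonneg h1, hb_def] at *
        simp only [if_pos h1] at hy
        nlinarith [hy.1, hy.2]
      · rw [min_eq_left h1.le, abs_of_neg h1, hb_def] at *
        simp only [if_neg (not_le.mpr h1)] at hy
        nlinarith [hy.1, hy.2]
    constructor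
    · simp only [Set.mem_setOf_eq]
      have := hkey
      rw [hm0_def] at this
      linarith
    · constructor <;> simp only [Set.mem_Icc] <;> constructor <;> linarith [hx.1, hx.2, hy.1, hy.2]
  · nlinarith
  · -- the integral inequality
    rw [prod_int a b l c2s c3s c4 hl.le]
    set Jy := ∫ y in Set.Icc b (b+l), (c2s + c4*y)^2 with hJy_def
    set Jx := ∫ x in Set.Icc a (a+l), (c3s + c4*x)^2 with hJx_def
    have hJy : (1/576)*(l*c2s^2 + 16*l^3*c4^2) ≤ Jy := by
      rw [hJy_def, antideriv c2s c4 b (b+l) (by linarith)]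
      exact G_lower c2s c4 b l hl hb0 (by linarith)
    have hJx : (1/576)*(l*c3s^2 + 16*l^3*c4^2) ≤ Jx := by
      rw [hJx_def, antideriv c3s c4 a (a+l) (by linarith)]
      exact G_lower c3s c4 a l hl ha0 (by linarith)
    have hlne : l ≠ 0 := hl.ne'
    have hll : h/l^2*l = 4 := by rw [hl4]; field_simp
    have heq : (h / l^2) * (βs * (l * Jy + l * Jx)) = (h/l^2*l) * (βs * (Jy + Jx)) := by ring
    rw [heq, hll]
    have hsum : (1/576)*(l*c2s^2 + 16*l^3*c4^2) + (1/576)*(l*c3s^2 + 16*l^3*c4^2) ≤ Jy + Jx :=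
      add_le_add hJy hJx
    have := mul_le_mul_of_nonneg_left hsum hβs.le
    rw [hl4]
    nlinarith [this, mul_nonneg hβs.le (mul_nonneg (le_of_lt (by positivity : (0:ℝ) < l^3)) (sq_nonneg c4))]
end

section
/- There exists a constant C depending only on β⁻ and β⁺ (independent of d, e and h) such that for all 0 < h < 1, every interface configuration on K = [0,h]² of Type I (d, e ∈ [0,1], (d,e) ≠ (0,0)) or Type II (d, e ∈ [0,1]), every bilinear IFE function v on K, every edge B of K, and each p ∈ {x, y}: ∥β v_p∥_{L²(B)} ≤ C h^{1/2} |K|^{-1/2} ∥√β ∇v∥_{L²(K)}. -/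
open MeasureTheory

/-- The closed square `K = [0,h] × [0,h]`. -/
def sqK (h : ℝ) : Set (ℝ × ℝ) := Set.Icc (0:ℝ) h ×ˢ Set.Icc (0:ℝ) h

/-- `∥√β ∇v∥²_{L²(K)} = β⁻∫_{K⁻}|∇v⁻|² + β⁺∫_{K⁺}|∇v⁺|²` for the piecewise bilinear
function with pieces `vˢ = c₁ˢ + c₂ˢx + c₃ˢy + c₄xy`, `∇vˢ = (c₂ˢ + c₄y, c₃ˢ + c₄x)`. -/
noncomputable def energySqBil (βm βp c2m c3m c2p c3p c4 : ℝ) (Km Kp : Set (ℝ × ℝ)) : ℝ :=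
  βm * (∫ X in Km, ((c2m + c4 * X.2) ^ 2 + (c3m + c4 * X.1) ^ 2)) +
    βp * (∫ X in Kp, ((c2p + c4 * X.2) ^ 2 + (c3p + c4 * X.1) ^ 2))

/-- `∥β v_x∥²_{L²(B)} = ∫_{B∩K⁻}(β⁻ ∂ₓv⁻)² ds + ∫_{B∩K⁺}(β⁺ ∂ₓv⁺)² ds`, where the segment
`B` from `P` to `Q` is parametrized by `t ↦ P + t(Q-P)`, `t ∈ [0,1]`, `ds` arclength,
and `∂ₓ vˢ(x,y) = c₂ˢ + c₄ y`. -/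
noncomputable def edgeSqBilX (βm βp c2m c2p c4 : ℝ) (Km Kp : Set (ℝ × ℝ)) (P Q : ℝ × ℝ) : ℝ :=
  Real.sqrt ((Q.1 - P.1) ^ 2 + (Q.2 - P.2) ^ 2) *
    ((∫ t in {t : ℝ | t ∈ Set.Icc (0:ℝ) 1 ∧ P + t • (Q - P) ∈ Km},
        (βm * (c2m + c4 * (P + t • (Q - P)).2)) ^ 2) +
     (∫ t in {t : ℝ | t ∈ Set.Icc (0:ℝ) 1 ∧ P + t • (Q - P) ∈ Kp},
        (βp * (c2p + c4 * (P + t • (Q - P)).2)) ^ 2))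

/-- `∥β v_y∥²_{L²(B)}`, with `∂_y vˢ(x,y) = c₃ˢ + c₄ x`. -/
noncomputable def edgeSqBilY (βm βp c3m c3p c4 : ℝ) (Km Kp : Set (ℝ × ℝ)) (P Q : ℝ × ℝ) : ℝ :=
  Real.sqrt ((Q.1 - P.1) ^ 2 + (Q.2 - P.2) ^ 2) *
    ((∫ t in {t : ℝ | t ∈ Set.Icc (0:ℝ) 1 ∧ P + t • (Q - P) ∈ Km},
        (βm * (c3m + c4 * (P + t • (Q - P)).1)) ^ 2) +
     (∫ t in {t : ℝ | t ∈ Set.Icc (0:ℝ) 1 ∧ P + t • (Q - P) ∈ Kp},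
        (βp * (c3p + c4 * (P + t • (Q - P)).1)) ^ 2))

/-! ### Auxiliary lemmas -/

lemma lin_int (C0 C1 : ℝ) : ∫ t in (0:ℝ)..1, (C0 + C1 * t) = C0 + C1 / 2 := by
  have h : ∀ x ∈ Set.uIcc (0:ℝ) 1,
      HasDerivAt (fun t : ℝ => C0 * t + C1 * t ^ 2 / 2) (C0 + C1 * x) x := by
    intro x _
    have h1 : HasDerivAt (fun t : ℝ => C0 * t) C0 x := by
      simpa using (hasDerivAt_id x).const_mul C0
    have h2 : HasDerivAt (fun t : ℝ => C1 * t ^ 2 / 2) (C1 * x) x := by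
      have := ((hasDerivAt_pow 2 x).const_mul C1).div_const 2
      simpa using this.congr_deriv (by ring)
    exact h1.add h2
  rw [intervalIntegral.integral_eq_sub_of_hasDerivAt h
    (by apply Continuous.intervalIntegrable; fun_prop)]
  ring

lemma quad_int (c g a b : ℝ) : ∫ y in a..b, (c + g * y) ^ 2
    = (c ^ 2 * b + c * g * b ^ 2 + g ^ 2 * b ^ 3 / 3)
      - (c ^ 2 * a + c * g * a ^ 2 + g ^ 2 * a ^ 3 / 3) := by
  have h : ∀ x ∈ Set.uIcc a b,
      HasDerivAt (fun y : ℝ => c ^ 2 * y + c * g * y ^ 2 + g ^ 2 * y ^ 3 / 3)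
        ((c + g * x) ^ 2) x := by
    intro x _
    have h1 : HasDerivAt (fun y : ℝ => c ^ 2 * y) (c ^ 2) x := by
      simpa using (hasDerivAt_id x).const_mul (c ^ 2)
    have h2 : HasDerivAt (fun y : ℝ => c * g * y ^ 2) (c * g * (2 * x)) x := by
      simpa using (hasDerivAt_pow 2 x).const_mul (c * g)
    have h3 : HasDerivAt (fun y : ℝ => g ^ 2 * y ^ 3 / 3) (g ^ 2 * x ^ 2) x := by
      have := ((hasDerivAt_pow 3 x).const_mul (g ^ 2)).div_const 3
      simpa using this.congr_deriv (by ring)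
    have := (h1.add h2).add h3
    exact this.congr_deriv (by ring)
  rw [intervalIntegral.integral_eq_sub_of_hasDerivAt h
    (by apply Continuous.intervalIntegrable; fun_prop)]

lemma quad_lb (c g y0 h : ℝ) (h0 : 0 < h) (hy0 : 0 ≤ y0) (hy1 : y0 + h / 4 ≤ h) :
    h / 2304 * (c ^ 2 + g ^ 2 * h ^ 2) ≤ ∫ y in y0..(y0 + h / 4), (c + g * y) ^ 2 := by
  rw [quad_int]
  have hyh : y0 + h / 8 ≤ h := by linarith
  have hy8 : 0 ≤ y0 + h / 8 := by linarith
  have hs : c ^ 2 ≤ 2 * (c + g * (y0 + h / 8)) ^ 2 + 2 * (g * (y0 + h / 8)) ^ 2 := by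
    nlinarith [sq_nonneg (c + 2 * g * (y0 + h / 8))]
  have htt : (y0 + h / 8) ^ 2 ≤ h ^ 2 := pow_le_pow_left₀ hy8 hyh 2
  have ht : (g * (y0 + h / 8)) ^ 2 ≤ (g * h) ^ 2 := by nlinarith [sq_nonneg g, htt]
  have h1 : h * c ^ 2 ≤ h * (2 * (c + g * (y0 + h / 8)) ^ 2 + 2 * (g * (y0 + h / 8)) ^ 2) :=
    mul_le_mul_of_nonneg_left hs h0.le
  have h2 : h * (g * (y0 + h / 8)) ^ 2 ≤ h * (g * h) ^ 2 := mul_le_mul_of_nonneg_left ht h0.le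
  nlinarith [mul_nonneg h0.le (sq_nonneg (c + g * (y0 + h / 8)))]

lemma icc_int (c g a L : ℝ) (hL : 0 ≤ L) :
    ∫ y in Set.Icc a (a + L), (c + g * y) ^ 2 = ∫ y in a..(a + L), (c + g * y) ^ 2 := by
  rw [integral_Icc_eq_integral_Ioc, intervalIntegral.integral_of_le (by linarith)]

lemma rect_lb (c2 c3 g x0 y0 h : ℝ) (h0 : 0 < h) (hx0 : 0 ≤ x0) (hx1 : x0 + h / 4 ≤ h)
    (hy0 : 0 ≤ y0) (hy1 : y0 + h / 4 ≤ h) :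
    h ^ 2 / 9216 * (c2 ^ 2 + c3 ^ 2 + g ^ 2 * h ^ 2)
      ≤ ∫ X in Set.Icc x0 (x0 + h / 4) ×ˢ Set.Icc y0 (y0 + h / 4),
          ((c2 + g * X.2) ^ 2 + (c3 + g * X.1) ^ 2) := by
  have hL : (0:ℝ) ≤ h / 4 := by linarith
  have hvol : ∀ a : ℝ, ∫ _ in Set.Icc a (a + h / 4), (1:ℝ) = h / 4 := by
    intro a
    rw [setIntegral_const, measureReal_def, Real.volume_Icc, smul_eq_mul, mul_one,
      ENNReal.toReal_ofReal (by linarith)]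
    ring
  have hsplit : ∫ X in Set.Icc x0 (x0 + h / 4) ×ˢ Set.Icc y0 (y0 + h / 4),
        ((c2 + g * X.2) ^ 2 + (c3 + g * X.1) ^ 2)
      = (∫ X in Set.Icc x0 (x0 + h / 4) ×ˢ Set.Icc y0 (y0 + h / 4), (c2 + g * X.2) ^ 2)
        + ∫ X in Set.Icc x0 (x0 + h / 4) ×ˢ Set.Icc y0 (y0 + h / 4), (c3 + g * X.1) ^ 2 := by
    apply integral_add
    · exact ContinuousOn.integrableOn_compact (isCompact_Icc.prod isCompact_Icc)
        (((continuous_const.add (continuous_const.mul continuous_snd)).pow 2).continuousOn)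
    · exact ContinuousOn.integrableOn_compact (isCompact_Icc.prod isCompact_Icc)
        (((continuous_const.add (continuous_const.mul continuous_fst)).pow 2).continuousOn)
  have h1 : ∫ X in Set.Icc x0 (x0 + h / 4) ×ˢ Set.Icc y0 (y0 + h / 4), (c2 + g * X.2) ^ 2
      = (h / 4) * ∫ y in y0..(y0 + h / 4), (c2 + g * y) ^ 2 := by
    rw [Measure.volume_eq_prod ℝ ℝ]
    have := setIntegral_prod_mul (μ := (volume : Measure ℝ)) (ν := volume)
      (fun _ : ℝ => (1:ℝ)) (fun y => (c2 + g * y) ^ 2)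
      (Set.Icc x0 (x0 + h / 4)) (Set.Icc y0 (y0 + h / 4))
    simp only [one_mul] at this
    rw [this, hvol, icc_int _ _ _ _ hL]
  have h2 : ∫ X in Set.Icc x0 (x0 + h / 4) ×ˢ Set.Icc y0 (y0 + h / 4), (c3 + g * X.1) ^ 2
      = (h / 4) * ∫ x in x0..(x0 + h / 4), (c3 + g * x) ^ 2 := by
    rw [Measure.volume_eq_prod ℝ ℝ]
    have := setIntegral_prod_mul (μ := (volume : Measure ℝ)) (ν := volume)
      (fun x => (c3 + g * x) ^ 2) (fun _ : ℝ => (1:ℝ))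
      (Set.Icc x0 (x0 + h / 4)) (Set.Icc y0 (y0 + h / 4))
    simp only [mul_one] at this
    rw [this, hvol, icc_int _ _ _ _ hL]
    ring
  rw [hsplit, h1, h2]
  have q1 := quad_lb c2 g y0 h h0 hy0 hy1
  have q2 := quad_lb c3 g x0 h h0 hx0 hx1
  have q1' := mul_le_mul_of_nonneg_left q1 hL
  have q2' := mul_le_mul_of_nonneg_left q2 hL
  nlinarith [sq_nonneg (g * h), sq_nonneg h]

lemma piece_lb (c2 c3 g x0 y0 h : ℝ) (K : Set (ℝ × ℝ)) (h0 : 0 < h)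
    (hx0 : 0 ≤ x0) (hx1 : x0 + h / 4 ≤ h) (hy0 : 0 ≤ y0) (hy1 : y0 + h / 4 ≤ h)
    (hKsub : K ⊆ sqK h)
    (hS : Set.Icc x0 (x0 + h / 4) ×ˢ Set.Icc y0 (y0 + h / 4) ⊆ K) :
    h ^ 2 / 9216 * (c2 ^ 2 + c3 ^ 2 + g ^ 2 * h ^ 2)
      ≤ ∫ X in K, ((c2 + g * X.2) ^ 2 + (c3 + g * X.1) ^ 2) := by
  refine le_trans (rect_lb c2 c3 g x0 y0 h h0 hx0 hx1 hy0 hy1) (setIntegral_mono_set ?_ ?_ ?_)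
  · have hint : IntegrableOn (fun X : ℝ × ℝ => (c2 + g * X.2) ^ 2 + (c3 + g * X.1) ^ 2)
        (sqK h) := by
      refine ContinuousOn.integrableOn_compact ?_ (Continuous.continuousOn (by fun_prop))
      exact isCompact_Icc.prod isCompact_Icc
    exact hint.mono_set hKsub
  · exact Filter.Eventually.of_forall fun x => by positivity
  · exact HasSubset.Subset.eventuallyLE hS

lemma flux_int (β c2 c3 g : ℝ) (D E n : ℝ × ℝ) :
    (∫ t in (0:ℝ)..1, β * ((c2 + g * (D.2 + t * (E.2 - D.2))) * n.1 +
        (c3 + g * (D.1 + t * (E.1 - D.1))) * n.2))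
      = β * ((c2 + g * (D.2 + E.2) / 2) * n.1 + (c3 + g * (D.1 + E.1) / 2) * n.2) := by
  have hfun : (fun t : ℝ => β * ((c2 + g * (D.2 + t * (E.2 - D.2))) * n.1 +
        (c3 + g * (D.1 + t * (E.1 - D.1))) * n.2))
      = fun t : ℝ => (β * ((c2 + g * D.2) * n.1 + (c3 + g * D.1) * n.2))
          + (β * g * ((E.2 - D.2) * n.1 + (E.1 - D.1) * n.2)) * t := by
    funext t; ring
  rw [hfun, lin_int]; ring

lemma jump_est (βm βp c1m c2m c3m c1p c2p c3p g : ℝ) (D E n : ℝ × ℝ)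
    (hDE : D ≠ E) (hn : unitNormalTo n D E)
    (hj : bilJump βm βp c1m c2m c3m c1p c2p c3p g D E n) :
    ∃ S : ℝ, c2p - c2m = S * n.1 ∧ c3p - c3m = S * n.2 ∧
      βp * S = (βm - βp) * ((c2m + g * (D.2 + E.2) / 2) * n.1 +
        (c3m + g * (D.1 + E.1) / 2) * n.2) ∧
      βm * S = (βm - βp) * ((c2p + g * (D.2 + E.2) / 2) * n.1 +
        (c3p + g * (D.1 + E.1) / 2) * n.2) := by
  obtain ⟨hn1, hn2⟩ := hn
  obtain ⟨hjD, hjE, hjF⟩ := hj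
  set u1 := E.1 - D.1 with hu1
  set u2 := E.2 - D.2 with hu2
  have hune : u1 ≠ 0 ∨ u2 ≠ 0 := by
    by_contra hc
    push_neg at hc
    exact hDE (Prod.ext (by simp [hu1] at hc; linarith [hc.1])
      (by simp [hu2] at hc; linarith [hc.2]))
  have hsum : 0 < u1 ^ 2 + u2 ^ 2 := by
    rcases hune with h | h
    · positivity
    · positivity
  have horth : (c2p - c2m) * u1 + (c3p - c3m) * u2 = 0 := by
    linear_combination hjD - hjE
  have hcross : (c2p - c2m) * n.2 - (c3p - c3m) * n.1 = 0 := by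
    have hkey : ((c2p - c2m) * n.2 - (c3p - c3m) * n.1) * (u1 ^ 2 + u2 ^ 2) = 0 := by
      linear_combination (n.2 * u1 - n.1 * u2) * horth
        + ((c2p - c2m) * u2 - (c3p - c3m) * u1) * hn2
    rcases mul_eq_zero.1 hkey with h | h
    · exact h
    · exact absurd h (ne_of_gt hsum)
  refine ⟨(c2p - c2m) * n.1 + (c3p - c3m) * n.2, ?_, ?_, ?_, ?_⟩
  · linear_combination (-(c2p - c2m)) * hn1 + n.2 * hcross
  · linear_combination (-(c3p - c3m)) * hn1 - n.1 * hcross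
  · have hPos : 0 < Real.sqrt (u1 ^ 2 + u2 ^ 2) := Real.sqrt_pos.2 hsum
    have hF := mul_left_cancel₀ (ne_of_gt hPos) hjF
    rw [flux_int, flux_int] at hF
    linear_combination -hF
  · have hPos : 0 < Real.sqrt (u1 ^ 2 + u2 ^ 2) := Real.sqrt_pos.2 hsum
    have hF := mul_left_cancel₀ (ne_of_gt hPos) hjF
    rw [flux_int, flux_int] at hF
    linear_combination -hF

lemma set_int_ub (f : ℝ → ℝ) (S : Set ℝ) (M : ℝ) (hf : Continuous f) (h0 : ∀ t, 0 ≤ f t)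
    (hS : S ⊆ Set.Icc (0:ℝ) 1) (hM : ∀ t ∈ Set.Icc (0:ℝ) 1, f t ≤ M) :
    ∫ t in S, f t ≤ M := by
  have hint : IntegrableOn f (Set.Icc (0:ℝ) 1) :=
    ContinuousOn.integrableOn_compact isCompact_Icc hf.continuousOn
  calc ∫ t in S, f t ≤ ∫ t in Set.Icc (0:ℝ) 1, f t :=
        setIntegral_mono_set hint (Filter.Eventually.of_forall fun t => h0 t)
          (HasSubset.Subset.eventuallyLE hS)
    _ ≤ ∫ _ in Set.Icc (0:ℝ) 1, M :=
        setIntegral_mono_on hint (integrableOn_const (by simp [Real.volume_Icc]) (by simp)) measurableSet_Icc hM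
    _ = M := by simp [Real.volume_Icc]

lemma edge_pt_bound (β c g y h : ℝ) (h0 : 0 < h) (hy0 : 0 ≤ y) (hy1 : y ≤ h) :
    (β * (c + g * y)) ^ 2 ≤ β ^ 2 * (2 * c ^ 2 + 2 * g ^ 2 * h ^ 2) := by
  have inner : (c + g * y) ^ 2 ≤ 2 * c ^ 2 + 2 * g ^ 2 * h ^ 2 := by
    nlinarith [sq_nonneg (c - g * y), sq_nonneg g,
      mul_nonneg (mul_nonneg (sq_nonneg g) (sub_nonneg.2 hy1)) (by linarith : (0:ℝ) ≤ h + y)]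
  calc (β * (c + g * y)) ^ 2 = β ^ 2 * (c + g * y) ^ 2 := by ring
    _ ≤ β ^ 2 * (2 * c ^ 2 + 2 * g ^ 2 * h ^ 2) := mul_le_mul_of_nonneg_left inner (sq_nonneg β)

lemma edgeX_ub (βm βp c2m c2p g h : ℝ) (Km Kp : Set (ℝ × ℝ)) (P Q : ℝ × ℝ) (h0 : 0 < h)
    (hlen : (Q.1 - P.1) ^ 2 + (Q.2 - P.2) ^ 2 = h ^ 2)
    (hy : ∀ t ∈ Set.Icc (0:ℝ) 1, (P + t • (Q - P)).2 ∈ Set.Icc (0:ℝ) h) :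
    edgeSqBilX βm βp c2m c2p g Km Kp P Q
      ≤ h * (βm ^ 2 * (2 * c2m ^ 2 + 2 * g ^ 2 * h ^ 2)
           + βp ^ 2 * (2 * c2p ^ 2 + 2 * g ^ 2 * h ^ 2)) := by
  unfold edgeSqBilX
  rw [hlen, Real.sqrt_sq h0.le]
  refine mul_le_mul_of_nonneg_left (add_le_add ?_ ?_) h0.le
  · refine set_int_ub _ _ _ (by fun_prop) (fun t => sq_nonneg _) (fun t ht => ht.1) ?_
    intro t ht
    exact edge_pt_bound βm c2m g _ h h0 (hy t ht).1 (hy t ht).2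
  · refine set_int_ub _ _ _ (by fun_prop) (fun t => sq_nonneg _) (fun t ht => ht.1) ?_
    intro t ht
    exact edge_pt_bound βp c2p g _ h h0 (hy t ht).1 (hy t ht).2

lemma edgeY_ub (βm βp c3m c3p g h : ℝ) (Km Kp : Set (ℝ × ℝ)) (P Q : ℝ × ℝ) (h0 : 0 < h)
    (hlen : (Q.1 - P.1) ^ 2 + (Q.2 - P.2) ^ 2 = h ^ 2)
    (hx : ∀ t ∈ Set.Icc (0:ℝ) 1, (P + t • (Q - P)).1 ∈ Set.Icc (0:ℝ) h) :
    edgeSqBilY βm βp c3m c3p g Km Kp P Q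
      ≤ h * (βm ^ 2 * (2 * c3m ^ 2 + 2 * g ^ 2 * h ^ 2)
           + βp ^ 2 * (2 * c3p ^ 2 + 2 * g ^ 2 * h ^ 2)) := by
  unfold edgeSqBilY
  rw [hlen, Real.sqrt_sq h0.le]
  refine mul_le_mul_of_nonneg_left (add_le_add ?_ ?_) h0.le
  · refine set_int_ub _ _ _ (by fun_prop) (fun t => sq_nonneg _) (fun t ht => ht.1) ?_
    intro t ht
    exact edge_pt_bound βm c3m g _ h h0 (hx t ht).1 (hx t ht).2
  · refine set_int_ub _ _ _ (by fun_prop) (fun t => sq_nonneg _) (fun t ht => ht.1) ?_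
    intro t ht
    exact edge_pt_bound βp c3p g _ h h0 (hx t ht).1 (hx t ht).2

lemma sqrt_step (edge En h C2 : ℝ) (h0 : 0 < h) (hC2 : 0 < C2) (hEn : 0 ≤ En)
    (hb : edge * h ≤ C2 * En) :
    Real.sqrt edge ≤ Real.sqrt C2 * Real.sqrt h * (Real.sqrt (h ^ 2))⁻¹ * Real.sqrt En := by
  rw [Real.sqrt_sq h0.le]
  have h1 : edge ≤ C2 * En / h := (le_div_iff₀ h0).2 hb
  have hsq : Real.sqrt h * Real.sqrt h = h := Real.mul_self_sqrt h0.le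
  have hspos : 0 < Real.sqrt h := Real.sqrt_pos.2 h0
  calc Real.sqrt edge ≤ Real.sqrt (C2 * En / h) := Real.sqrt_le_sqrt h1
    _ = Real.sqrt C2 * Real.sqrt En / Real.sqrt h := by
        rw [div_eq_mul_inv, Real.sqrt_mul (by positivity : (0:ℝ) ≤ C2 * En),
          Real.sqrt_inv, Real.sqrt_mul hC2.le, div_eq_mul_inv]
    _ = Real.sqrt C2 * Real.sqrt h * h⁻¹ * Real.sqrt En := by
        rw [div_eq_mul_inv]
        have hinv : h⁻¹ = (Real.sqrt h)⁻¹ * (Real.sqrt h)⁻¹ := by rw [← mul_inv, hsq]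
        rw [hinv, show Real.sqrt C2 * Real.sqrt h * ((Real.sqrt h)⁻¹ * (Real.sqrt h)⁻¹)
            * Real.sqrt En = Real.sqrt C2 * Real.sqrt En * (Real.sqrt h)⁻¹
              * (Real.sqrt h * (Real.sqrt h)⁻¹) by ring, mul_inv_cancel₀ hspos.ne', mul_one]


set_option maxHeartbeats 2000000 in
/-- trace inequality `∥β v_p∥_{L²(B)} ≤ C h^{1/2}|K|^{-1/2}∥√β ∇v∥_{L²(K)}`
(`p = x, y`) for bilinear IFE functions on `K = [0,h]²`, for interface configurations of
Type I or Type II and every edge `B` of `K`, with `C` depending only on `β⁻, β⁺`. -/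
theorem stmt10 (βm βp : ℝ) (hβm : 0 < βm) (hβp : 0 < βp) :
    ∃ C : ℝ, 0 < C ∧
      ∀ h d e c1m c2m c3m c1p c2p c3p c4 : ℝ, ∀ D E : ℝ × ℝ, ∀ Km Kp : Set (ℝ × ℝ),
        0 < h → h < 1 →
        d ∈ Set.Icc (0:ℝ) 1 → e ∈ Set.Icc (0:ℝ) 1 →
        ((D = ((0:ℝ), d * h) ∧ E = (e * h, (0:ℝ)) ∧ (d, e) ≠ (0, 0) ∧
            Km = {X ∈ sqK h | d * X.1 + e * X.2 ≤ d * e * h} ∧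
            Kp = {X ∈ sqK h | d * e * h ≤ d * X.1 + e * X.2}) ∨
         (D = (d * h, h) ∧ E = (e * h, (0:ℝ)) ∧
            Km = {X ∈ sqK h | X.1 ≤ e * h + (d - e) * X.2} ∧
            Kp = {X ∈ sqK h | e * h + (d - e) * X.2 ≤ X.1})) →
        (∃ n : ℝ × ℝ, unitNormalTo n D E ∧
            bilJump βm βp c1m c2m c3m c1p c2p c3p c4 D E n) →
        ∀ P Q : ℝ × ℝ,
          ((P = ((0:ℝ), (0:ℝ)) ∧ Q = ((0:ℝ), h)) ∨
           (P = ((h:ℝ), (0:ℝ)) ∧ Q = (h, h)) ∨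
           (P = ((0:ℝ), (0:ℝ)) ∧ Q = (h, (0:ℝ))) ∨
           (P = ((0:ℝ), h) ∧ Q = (h, h))) →
          Real.sqrt (edgeSqBilX βm βp c2m c2p c4 Km Kp P Q)
              ≤ C * Real.sqrt h * (Real.sqrt (h ^ 2))⁻¹ *
                Real.sqrt (energySqBil βm βp c2m c3m c2p c3p c4 Km Kp) ∧
          Real.sqrt (edgeSqBilY βm βp c3m c3p c4 Km Kp P Q)
              ≤ C * Real.sqrt h * (Real.sqrt (h ^ 2))⁻¹ *
                Real.sqrt (energySqBil βm βp c2m c3m c2p c3p c4 Km Kp) := by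
  
  have hbmin : 0 < min βm βp := lt_min hβm hβp
  have hbmax : 0 < max βm βp := lt_of_lt_of_le hβm (le_max_left _ _)
  set bmin := min βm βp with hbmindef
  set bmax := max βm βp with hbmaxdef
  set C2 := 18432 * bmax ^ 2 * (4 * bmin ^ 2 + 8 * (βm - βp) ^ 2) / bmin ^ 3 with hC2def
  have hC2pos : 0 < C2 := by
    rw [hC2def]
    apply div_pos
    · have h1 : 0 < 4 * bmin ^ 2 + 8 * (βm - βp) ^ 2 := by
        linarith [pow_pos hbmin 2, sq_nonneg (βm - βp)]
      have h2 : (0:ℝ) < 18432 * bmax ^ 2 := by positivity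
      exact mul_pos h2 h1
    · exact pow_pos hbmin 3
  refine ⟨Real.sqrt C2, Real.sqrt_pos.2 hC2pos, ?_⟩
  intro h d e c1m c2m c3m c1p c2p c3p c4 D E Km Kp h0 h1 hd he htype hjump P Q hPQ
  obtain ⟨n, hn, hj⟩ := hjump
  set En := energySqBil βm βp c2m c3m c2p c3p c4 Km Kp with hEndef
  have hEn0 : 0 ≤ En := by
    rw [hEndef]; unfold energySqBil
    have i1 : 0 ≤ ∫ X in Km, ((c2m + c4 * X.2) ^ 2 + (c3m + c4 * X.1) ^ 2) :=
      integral_nonneg fun x => by positivity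
    have i2 : 0 ≤ ∫ X in Kp, ((c2p + c4 * X.2) ^ 2 + (c3p + c4 * X.1) ^ 2) :=
      integral_nonneg fun x => by positivity
    exact add_nonneg (mul_nonneg hβm.le i1) (mul_nonneg hβp.le i2)
  -- coordinate facts
  have hdh0 : 0 ≤ d * h := mul_nonneg hd.1 h0.le
  have hdh1 : d * h ≤ h := by linarith only [mul_nonneg (by linarith [hd.2] : (0:ℝ) ≤ 1 - d) h0.le]
  have heh0 : 0 ≤ e * h := mul_nonneg he.1 h0.le
  have heh1 : e * h ≤ h := by linarith only [mul_nonneg (by linarith [he.2] : (0:ℝ) ≤ 1 - e) h0.le]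
  have hgeom : (0 ≤ D.1 ∧ D.1 ≤ h ∧ 0 ≤ D.2 ∧ D.2 ≤ h ∧ 0 ≤ E.1 ∧ E.1 ≤ h ∧ 0 ≤ E.2 ∧ E.2 ≤ h)
      ∧ D ≠ E ∧ Km ⊆ sqK h ∧ Kp ⊆ sqK h ∧
      ((∃ x0 y0 : ℝ, 0 ≤ x0 ∧ x0 + h / 4 ≤ h ∧ 0 ≤ y0 ∧ y0 + h / 4 ≤ h ∧
          Set.Icc x0 (x0 + h / 4) ×ˢ Set.Icc y0 (y0 + h / 4) ⊆ Km) ∨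
       (∃ x0 y0 : ℝ, 0 ≤ x0 ∧ x0 + h / 4 ≤ h ∧ 0 ≤ y0 ∧ y0 + h / 4 ≤ h ∧
          Set.Icc x0 (x0 + h / 4) ×ˢ Set.Icc y0 (y0 + h / 4) ⊆ Kp)) := by
    rcases htype with ⟨hD, hE, hne, hKm, hKp⟩ | ⟨hD, hE, hKm, hKp⟩
    · subst hD; subst hE; subst hKm; subst hKp
      refine ⟨⟨le_refl 0, h0.le, hdh0, hdh1, heh0, heh1, le_refl 0, h0.le⟩, ?_,
        Set.sep_subset _ _, Set.sep_subset _ _, Or.inr ⟨3 * h / 4, 3 * h / 4,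
          by linarith, by linarith, by linarith, by linarith, ?_⟩⟩
      · intro hq
        have h2 : d * h = 0 := congrArg Prod.snd hq
        have h1' : (0:ℝ) = e * h := congrArg Prod.fst hq
        apply hne
        have hd0 : d = 0 := by
          rcases mul_eq_zero.1 h2 with hh | hh
          · exact hh
          · exact absurd hh (ne_of_gt h0)
        have he0 : e = 0 := by
          rcases mul_eq_zero.1 h1'.symm with hh | hh
          · exact hh
          · exact absurd hh (ne_of_gt h0)
        rw [hd0, he0]
      · rintro ⟨x, y⟩ hX
        simp only [Set.mem_prod, Set.mem_Icc] at hX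
        obtain ⟨⟨ha1, ha2⟩, hb1, hb2⟩ := hX
        refine Set.mem_sep ?_ ?_
        · unfold sqK
          exact Set.mem_prod.2 ⟨Set.mem_Icc.2 ⟨by linarith, by linarith⟩,
            Set.mem_Icc.2 ⟨by linarith, by linarith⟩⟩
        · show d * e * h ≤ d * x + e * y
          linarith only [mul_nonneg (mul_nonneg hd.1 (by linarith [he.2] : (0:ℝ) ≤ 1 - e)) h0.le,
            mul_nonneg (mul_nonneg he.1 (by linarith [hd.2] : (0:ℝ) ≤ 1 - d)) h0.le,
            mul_nonneg hd.1 h0.le, mul_nonneg he.1 h0.le,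
            mul_le_mul_of_nonneg_left ha1 hd.1, mul_le_mul_of_nonneg_left hb1 he.1]
    · subst hD; subst hE; subst hKm; subst hKp
      refine ⟨⟨hdh0, hdh1, h0.le, le_refl h, heh0, heh1, le_refl 0, h0.le⟩, ?_,
        Set.sep_subset _ _, Set.sep_subset _ _, ?_⟩
      · intro hq
        have h2 : h = 0 := congrArg Prod.snd hq
        exact absurd h2 (ne_of_gt h0)
      · rcases le_or_gt (1 / 2 : ℝ) d with hd2 | hd2
        · -- d ≥ 1/2 : Km contains [0,h/4] × [3h/4, h]
          refine Or.inl ⟨0, 3 * h / 4, le_refl 0, by linarith, by linarith, by linarith, ?_⟩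
          rintro ⟨x, y⟩ hX
          simp only [Set.mem_prod, Set.mem_Icc] at hX
          obtain ⟨⟨ha1, ha2⟩, hb1, hb2⟩ := hX
          refine Set.mem_sep ?_ ?_
          · unfold sqK
            exact Set.mem_prod.2 ⟨Set.mem_Icc.2 ⟨by linarith, by linarith⟩,
              Set.mem_Icc.2 ⟨by linarith, by linarith⟩⟩
          · show x ≤ e * h + (d - e) * y
            linarith only [mul_nonneg he.1 (by linarith : (0:ℝ) ≤ h - y),
              mul_le_mul hd2 hb1 (by linarith) (by linarith [hd.1]), ha2, h0.le]
        · rcases le_or_gt (1 / 2 : ℝ) e with he2 | he2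
          · -- e ≥ 1/2 : Km contains [0,h/4] × [0, h/4]
            refine Or.inl ⟨0, 0, le_refl 0, by linarith, le_refl 0, by linarith, ?_⟩
            rintro ⟨x, y⟩ hX
            simp only [Set.mem_prod, Set.mem_Icc] at hX
            obtain ⟨⟨ha1, ha2⟩, hb1, hb2⟩ := hX
            refine Set.mem_sep ?_ ?_
            · unfold sqK
              exact Set.mem_prod.2 ⟨Set.mem_Icc.2 ⟨by linarith, by linarith⟩,
                Set.mem_Icc.2 ⟨by linarith, by linarith⟩⟩
            · show x ≤ e * h + (d - e) * y
              linarith only [mul_le_mul he2 (by linarith : 3 * h / 4 ≤ h - y)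
                  (by linarith) (by linarith [he.1]),
                mul_nonneg hd.1 hb1, ha2, h0.le]
          · -- d < 1/2, e < 1/2 : Kp contains [3h/4, h] × [0, h/4]
            refine Or.inr ⟨3 * h / 4, 0, by linarith, by linarith, le_refl 0, by linarith, ?_⟩
            rintro ⟨x, y⟩ hX
            simp only [Set.mem_prod, Set.mem_Icc] at hX
            obtain ⟨⟨ha1, ha2⟩, hb1, hb2⟩ := hX
            refine Set.mem_sep ?_ ?_
            · unfold sqK
              exact Set.mem_prod.2 ⟨Set.mem_Icc.2 ⟨by linarith, by linarith⟩,
                Set.mem_Icc.2 ⟨by linarith, by linarith⟩⟩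
            · show e * h + (d - e) * y ≤ x
              linarith only [mul_le_mul_of_nonneg_right hd2.le hb1,
                mul_le_mul_of_nonneg_right he2.le (by linarith : (0:ℝ) ≤ h - y), ha1, h0.le]
  obtain ⟨⟨hD10, hD11, hD20, hD21, hE10, hE11, hE20, hE21⟩, hDE, hKmsub, hKpsub, hgeo⟩ := hgeom
  -- jump analysis
  obtain ⟨S, hS1, hS2, hSm, hSp⟩ := jump_est βm βp c1m c2m c3m c1p c2p c3p c4 D E n hDE hn hj
  have hnn : n.1 ^ 2 + n.2 ^ 2 = 1 := hn.1
  have hdel : (c2p - c2m) ^ 2 + (c3p - c3m) ^ 2 = S ^ 2 := by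
    rw [hS1, hS2]; linear_combination S ^ 2 * hnn
  have hptm2 := edge_pt_bound 1 c2m c4 ((D.2 + E.2) / 2) h h0 (by linarith) (by linarith)
  have hptm3 := edge_pt_bound 1 c3m c4 ((D.1 + E.1) / 2) h h0 (by linarith) (by linarith)
  have hptp2 := edge_pt_bound 1 c2p c4 ((D.2 + E.2) / 2) h h0 (by linarith) (by linarith)
  have hptp3 := edge_pt_bound 1 c3p c4 ((D.1 + E.1) / 2) h h0 (by linarith) (by linarith)
  simp only [one_mul, one_pow] at hptm2 hptm3 hptp2 hptp3
  have hFm2 : ((c2m + c4 * (D.2 + E.2) / 2) * n.1 + (c3m + c4 * (D.1 + E.1) / 2) * n.2) ^ 2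
      ≤ 4 * (c2m ^ 2 + c3m ^ 2 + c4 ^ 2 * h ^ 2) := by
    have h1' : ((c2m + c4 * (D.2 + E.2) / 2) ^ 2 + (c3m + c4 * (D.1 + E.1) / 2) ^ 2)
        * (n.1 ^ 2 + n.2 ^ 2)
        = (c2m + c4 * (D.2 + E.2) / 2) ^ 2 + (c3m + c4 * (D.1 + E.1) / 2) ^ 2 := by
      rw [hnn, mul_one]
    linarith only [sq_nonneg ((c2m + c4 * (D.2 + E.2) / 2) * n.2
      - (c3m + c4 * (D.1 + E.1) / 2) * n.1), h1', hptm2, hptm3,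
      sq_nonneg c2m, sq_nonneg c3m]
  have hFp2 : ((c2p + c4 * (D.2 + E.2) / 2) * n.1 + (c3p + c4 * (D.1 + E.1) / 2) * n.2) ^ 2
      ≤ 4 * (c2p ^ 2 + c3p ^ 2 + c4 ^ 2 * h ^ 2) := by
    have h1' : ((c2p + c4 * (D.2 + E.2) / 2) ^ 2 + (c3p + c4 * (D.1 + E.1) / 2) ^ 2)
        * (n.1 ^ 2 + n.2 ^ 2)
        = (c2p + c4 * (D.2 + E.2) / 2) ^ 2 + (c3p + c4 * (D.1 + E.1) / 2) ^ 2 := by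
      rw [hnn, mul_one]
    linarith only [sq_nonneg ((c2p + c4 * (D.2 + E.2) / 2) * n.2
      - (c3p + c4 * (D.1 + E.1) / 2) * n.1), h1', hptp2, hptp3,
      sq_nonneg c2p, sq_nonneg c3p]
  have hJm : bmin ^ 2 * S ^ 2 ≤ 4 * (βm - βp) ^ 2 * (c2m ^ 2 + c3m ^ 2 + c4 ^ 2 * h ^ 2) := by
    have e1 : (βp * S) ^ 2 = ((βm - βp) * ((c2m + c4 * (D.2 + E.2) / 2) * n.1 +
        (c3m + c4 * (D.1 + E.1) / 2) * n.2)) ^ 2 := by rw [hSm]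
    have e2 : bmin ^ 2 ≤ βp ^ 2 := pow_le_pow_left₀ hbmin.le (min_le_right βm βp) 2
    linarith only [e1, mul_le_mul_of_nonneg_left hFm2 (sq_nonneg (βm - βp)),
      mul_le_mul_of_nonneg_right e2 (sq_nonneg S)]
  have hJp : bmin ^ 2 * S ^ 2 ≤ 4 * (βm - βp) ^ 2 * (c2p ^ 2 + c3p ^ 2 + c4 ^ 2 * h ^ 2) := by
    have e1 : (βm * S) ^ 2 = ((βm - βp) * ((c2p + c4 * (D.2 + E.2) / 2) * n.1 +
        (c3p + c4 * (D.1 + E.1) / 2) * n.2)) ^ 2 := by rw [hSp]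
    have e2 : bmin ^ 2 ≤ βm ^ 2 := pow_le_pow_left₀ hbmin.le (min_le_left βm βp) 2
    linarith only [e1, mul_le_mul_of_nonneg_left hFp2 (sq_nonneg (βm - βp)),
      mul_le_mul_of_nonneg_right e2 (sq_nonneg S)]
  -- energy lower bound through a quarter square on either side
  have hEm : ∀ x0 y0 : ℝ, 0 ≤ x0 → x0 + h / 4 ≤ h → 0 ≤ y0 → y0 + h / 4 ≤ h →
      (Set.Icc x0 (x0 + h / 4) ×ˢ Set.Icc y0 (y0 + h / 4) ⊆ Km) →
      bmin * (h ^ 2 / 9216) * (c2m ^ 2 + c3m ^ 2 + c4 ^ 2 * h ^ 2) ≤ En := by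
    intro x0 y0 hx0 hx1 hy0 hy1 hsub
    have hp := piece_lb c2m c3m c4 x0 y0 h Km h0 hx0 hx1 hy0 hy1 hKmsub hsub
    have hother : 0 ≤ βp * ∫ X in Kp, ((c2p + c4 * X.2) ^ 2 + (c3p + c4 * X.1) ^ 2) :=
      mul_nonneg hβp.le (integral_nonneg fun x => by positivity)
    have hmm := mul_le_mul_of_nonneg_left hp hβm.le
    have hnn2 : (0:ℝ) ≤ h ^ 2 / 9216 * (c2m ^ 2 + c3m ^ 2 + c4 ^ 2 * h ^ 2) := by positivity
    rw [hEndef]; unfold energySqBil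
    linarith only [hmm, hother, mul_le_mul_of_nonneg_right (min_le_left βm βp) hnn2]
  have hEp : ∀ x0 y0 : ℝ, 0 ≤ x0 → x0 + h / 4 ≤ h → 0 ≤ y0 → y0 + h / 4 ≤ h →
      (Set.Icc x0 (x0 + h / 4) ×ˢ Set.Icc y0 (y0 + h / 4) ⊆ Kp) →
      bmin * (h ^ 2 / 9216) * (c2p ^ 2 + c3p ^ 2 + c4 ^ 2 * h ^ 2) ≤ En := by
    intro x0 y0 hx0 hx1 hy0 hy1 hsub
    have hp := piece_lb c2p c3p c4 x0 y0 h Kp h0 hx0 hx1 hy0 hy1 hKpsub hsub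
    have hother : 0 ≤ βm * ∫ X in Km, ((c2m + c4 * X.2) ^ 2 + (c3m + c4 * X.1) ^ 2) :=
      mul_nonneg hβm.le (integral_nonneg fun x => by positivity)
    have hmm := mul_le_mul_of_nonneg_left hp hβp.le
    have hnn2 : (0:ℝ) ≤ h ^ 2 / 9216 * (c2p ^ 2 + c3p ^ 2 + c4 ^ 2 * h ^ 2) := by positivity
    rw [hEndef]; unfold energySqBil
    linarith only [hmm, hother, mul_le_mul_of_nonneg_right (min_le_right βm βp) hnn2]
  have hKey : ∃ Ss : ℝ, 0 ≤ Ss ∧ bmin * (h ^ 2 / 9216) * Ss ≤ En ∧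
      bmin ^ 2 * (c2m ^ 2 + c3m ^ 2 + c2p ^ 2 + c3p ^ 2 + 2 * c4 ^ 2 * h ^ 2)
        ≤ (4 * bmin ^ 2 + 8 * (βm - βp) ^ 2) * Ss := by
    rcases hgeo with ⟨x0, y0, hx0, hx1, hy0, hy1, hsub⟩ | ⟨x0, y0, hx0, hx1, hy0, hy1, hsub⟩
    · refine ⟨c2m ^ 2 + c3m ^ 2 + c4 ^ 2 * h ^ 2, by positivity,
        hEm x0 y0 hx0 hx1 hy0 hy1 hsub, ?_⟩
      have k1 : c2p ^ 2 ≤ 2 * c2m ^ 2 + 2 * (c2p - c2m) ^ 2 := by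
        linarith only [sq_nonneg (2 * c2m - c2p)]
      have k2 : c3p ^ 2 ≤ 2 * c3m ^ 2 + 2 * (c3p - c3m) ^ 2 := by
        linarith only [sq_nonneg (2 * c3m - c3p)]
      have k3 := mul_le_mul_of_nonneg_left k1 (sq_nonneg bmin)
      have k4 := mul_le_mul_of_nonneg_left k2 (sq_nonneg bmin)
      have k5 : bmin ^ 2 * ((c2p - c2m) ^ 2 + (c3p - c3m) ^ 2) = bmin ^ 2 * S ^ 2 := by
        rw [hdel]
      linarith only [hJm, k3, k4, k5, mul_nonneg (sq_nonneg bmin) (sq_nonneg c2m),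
        mul_nonneg (sq_nonneg bmin) (sq_nonneg c3m),
        mul_nonneg (sq_nonneg bmin) (mul_nonneg (sq_nonneg c4) (sq_nonneg h))]
    · refine ⟨c2p ^ 2 + c3p ^ 2 + c4 ^ 2 * h ^ 2, by positivity,
        hEp x0 y0 hx0 hx1 hy0 hy1 hsub, ?_⟩
      have k1 : c2m ^ 2 ≤ 2 * c2p ^ 2 + 2 * (c2p - c2m) ^ 2 := by
        linarith only [sq_nonneg (2 * c2p - c2m)]
      have k2 : c3m ^ 2 ≤ 2 * c3p ^ 2 + 2 * (c3p - c3m) ^ 2 := by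
        linarith only [sq_nonneg (2 * c3p - c3m)]
      have k3 := mul_le_mul_of_nonneg_left k1 (sq_nonneg bmin)
      have k4 := mul_le_mul_of_nonneg_left k2 (sq_nonneg bmin)
      have k5 : bmin ^ 2 * ((c2p - c2m) ^ 2 + (c3p - c3m) ^ 2) = bmin ^ 2 * S ^ 2 := by
        rw [hdel]
      linarith only [hJp, k3, k4, k5, mul_nonneg (sq_nonneg bmin) (sq_nonneg c2p),
        mul_nonneg (sq_nonneg bmin) (sq_nonneg c3p),
        mul_nonneg (sq_nonneg bmin) (mul_nonneg (sq_nonneg c4) (sq_nonneg h))]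
  obtain ⟨Ss, hSs0, hEn1, hEn2⟩ := hKey
  have hfinal : ∀ edge : ℝ,
      edge ≤ 2 * bmax ^ 2 * h * (c2m ^ 2 + c3m ^ 2 + c2p ^ 2 + c3p ^ 2 + 2 * c4 ^ 2 * h ^ 2) →
      edge * h ≤ C2 * En := by
    intro edge hedge
    have hrw : C2 * En = 18432 * bmax ^ 2 * (4 * bmin ^ 2 + 8 * (βm - βp) ^ 2) * En / bmin ^ 3 := by
      rw [hC2def]; ring
    rw [hrw, le_div_iff₀ (pow_pos hbmin 3)]
    calc edge * h * bmin ^ 3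
        ≤ (2 * bmax ^ 2 * h * (c2m ^ 2 + c3m ^ 2 + c2p ^ 2 + c3p ^ 2 + 2 * c4 ^ 2 * h ^ 2))
            * h * bmin ^ 3 :=
          mul_le_mul_of_nonneg_right (mul_le_mul_of_nonneg_right hedge h0.le)
            (pow_nonneg hbmin.le 3)
      _ = (2 * bmax ^ 2 * h ^ 2 * bmin)
          * (bmin ^ 2 * (c2m ^ 2 + c3m ^ 2 + c2p ^ 2 + c3p ^ 2 + 2 * c4 ^ 2 * h ^ 2)) := by ring
      _ ≤ (2 * bmax ^ 2 * h ^ 2 * bmin) * ((4 * bmin ^ 2 + 8 * (βm - βp) ^ 2) * Ss) :=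
          mul_le_mul_of_nonneg_left hEn2
            (by positivity)
      _ = (2 * bmax ^ 2 * (4 * bmin ^ 2 + 8 * (βm - βp) ^ 2)) * 9216
          * (bmin * (h ^ 2 / 9216) * Ss) := by ring
      _ ≤ (2 * bmax ^ 2 * (4 * bmin ^ 2 + 8 * (βm - βp) ^ 2)) * 9216 * En :=
          mul_le_mul_of_nonneg_left hEn1 (by positivity)
      _ = 18432 * bmax ^ 2 * (4 * bmin ^ 2 + 8 * (βm - βp) ^ 2) * En := by ring
  have hbm2 : βm ^ 2 ≤ bmax ^ 2 := pow_le_pow_left₀ hβm.le (le_max_left βm βp) 2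
  have hbp2 : βp ^ 2 ≤ bmax ^ 2 := pow_le_pow_left₀ hβp.le (le_max_right βm βp) 2
  have hXmul : h * (βm ^ 2 * (2 * c2m ^ 2 + 2 * c4 ^ 2 * h ^ 2)
        + βp ^ 2 * (2 * c2p ^ 2 + 2 * c4 ^ 2 * h ^ 2))
      ≤ 2 * bmax ^ 2 * h * (c2m ^ 2 + c3m ^ 2 + c2p ^ 2 + c3p ^ 2 + 2 * c4 ^ 2 * h ^ 2) := by
    have hin : βm ^ 2 * (2 * c2m ^ 2 + 2 * c4 ^ 2 * h ^ 2)
          + βp ^ 2 * (2 * c2p ^ 2 + 2 * c4 ^ 2 * h ^ 2)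
        ≤ 2 * bmax ^ 2 * (c2m ^ 2 + c3m ^ 2 + c2p ^ 2 + c3p ^ 2 + 2 * c4 ^ 2 * h ^ 2) := by
      linarith only [mul_le_mul_of_nonneg_right hbm2
          (by positivity : (0:ℝ) ≤ 2 * c2m ^ 2 + 2 * c4 ^ 2 * h ^ 2),
        mul_le_mul_of_nonneg_right hbp2
          (by positivity : (0:ℝ) ≤ 2 * c2p ^ 2 + 2 * c4 ^ 2 * h ^ 2),
        mul_nonneg (sq_nonneg bmax) (sq_nonneg c3m),
        mul_nonneg (sq_nonneg bmax) (sq_nonneg c3p)]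
    calc h * (βm ^ 2 * (2 * c2m ^ 2 + 2 * c4 ^ 2 * h ^ 2)
          + βp ^ 2 * (2 * c2p ^ 2 + 2 * c4 ^ 2 * h ^ 2))
        ≤ h * (2 * bmax ^ 2 * (c2m ^ 2 + c3m ^ 2 + c2p ^ 2 + c3p ^ 2 + 2 * c4 ^ 2 * h ^ 2)) :=
          mul_le_mul_of_nonneg_left hin h0.le
      _ = 2 * bmax ^ 2 * h * (c2m ^ 2 + c3m ^ 2 + c2p ^ 2 + c3p ^ 2 + 2 * c4 ^ 2 * h ^ 2) := by
          ring
  have hYmul : h * (βm ^ 2 * (2 * c3m ^ 2 + 2 * c4 ^ 2 * h ^ 2)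
        + βp ^ 2 * (2 * c3p ^ 2 + 2 * c4 ^ 2 * h ^ 2))
      ≤ 2 * bmax ^ 2 * h * (c2m ^ 2 + c3m ^ 2 + c2p ^ 2 + c3p ^ 2 + 2 * c4 ^ 2 * h ^ 2) := by
    have hin : βm ^ 2 * (2 * c3m ^ 2 + 2 * c4 ^ 2 * h ^ 2)
          + βp ^ 2 * (2 * c3p ^ 2 + 2 * c4 ^ 2 * h ^ 2)
        ≤ 2 * bmax ^ 2 * (c2m ^ 2 + c3m ^ 2 + c2p ^ 2 + c3p ^ 2 + 2 * c4 ^ 2 * h ^ 2) := by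
      linarith only [mul_le_mul_of_nonneg_right hbm2
          (by positivity : (0:ℝ) ≤ 2 * c3m ^ 2 + 2 * c4 ^ 2 * h ^ 2),
        mul_le_mul_of_nonneg_right hbp2
          (by positivity : (0:ℝ) ≤ 2 * c3p ^ 2 + 2 * c4 ^ 2 * h ^ 2),
        mul_nonneg (sq_nonneg bmax) (sq_nonneg c2m),
        mul_nonneg (sq_nonneg bmax) (sq_nonneg c2p)]
    calc h * (βm ^ 2 * (2 * c3m ^ 2 + 2 * c4 ^ 2 * h ^ 2)
          + βp ^ 2 * (2 * c3p ^ 2 + 2 * c4 ^ 2 * h ^ 2))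
        ≤ h * (2 * bmax ^ 2 * (c2m ^ 2 + c3m ^ 2 + c2p ^ 2 + c3p ^ 2 + 2 * c4 ^ 2 * h ^ 2)) :=
          mul_le_mul_of_nonneg_left hin h0.le
      _ = 2 * bmax ^ 2 * h * (c2m ^ 2 + c3m ^ 2 + c2p ^ 2 + c3p ^ 2 + 2 * c4 ^ 2 * h ^ 2) := by
          ring
  rcases hPQ with ⟨hP, hQ⟩ | ⟨hP, hQ⟩ | ⟨hP, hQ⟩ | ⟨hP, hQ⟩ <;> subst hP <;> subst hQ <;>
    refine ⟨sqrt_step _ _ _ _ h0 hC2pos hEn0 (hfinal _ (le_trans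
        (edgeX_ub βm βp c2m c2p c4 h Km Kp _ _ h0 (by norm_num)
          (by
            intro t ht
            simp only [Set.mem_Icc] at ht
            simp only [Prod.mk_sub_mk, Prod.smul_mk, Prod.mk_add_mk, smul_eq_mul, Set.mem_Icc]
            constructor <;>
              linarith only [ht.1, ht.2, h0.le, mul_nonneg ht.1 h0.le,
                mul_nonneg (by linarith [ht.2] : (0:ℝ) ≤ 1 - t) h0.le])) hXmul)),
      sqrt_step _ _ _ _ h0 hC2pos hEn0 (hfinal _ (le_trans
        (edgeY_ub βm βp c3m c3p c4 h Km Kp _ _ h0 (by norm_num)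
          (by
            intro t ht
            simp only [Set.mem_Icc] at ht
            simp only [Prod.mk_sub_mk, Prod.smul_mk, Prod.mk_add_mk, smul_eq_mul, Set.mem_Icc]
            constructor <;>
              linarith only [ht.1, ht.2, h0.le, mul_nonneg ht.1 h0.le,
                mul_nonneg (by linarith [ht.2] : (0:ℝ) ≤ 1 - t) h0.le])) hYmul))⟩
end
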